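/- arXiv:1309.4798 — 8 statements merged into one kernel-verified Lean document; each statement's English description precedes it below -/
import Mathlib

section
/- Let n ≥ 1 and let F : (ℳⁿ)ⁿ → ℝ be a nonnegative function which is additive in each variable and which satisfies F(A₁,…,Aₙ) = 0 whenever there exist two indices i ≠ j such that A_i and A_j are proportional matrices of rank one. Then there exists a constant a ≥ 0 such that F(A₁,…,Aₙ) = a·D(A₁,…,Aₙ) for all A₁,…,Aₙ ∈ ℳⁿ. -/
/-- The mixed discriminant of `n` real `n × n` matrices:
`D(A₁,…,Aₙ) = (1/n!) Σ_{σ ∈ S(n)} det(M_σ)`, where the `j`-th column of `M_σ`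
is the `j`-th column of `A_{σ(j)}`. -/
noncomputable def mixedDisc (n : ℕ) (A : Fin n → Matrix (Fin n) (Fin n) ℝ) : ℝ :=
  ((n.factorial : ℝ))⁻¹ *
    ∑ σ : Equiv.Perm (Fin n), (Matrix.of fun i j => A (σ j) i j).det


namespace MixedDiscAux

open Matrix Function Finset

variable {n : ℕ}



/-- An additive function on ℝ bounded below is zero. -/
lemma cauchy_bounded_zero (q : ℝ → ℝ) (hq : ∀ s t, q (s + t) = q s + q t)
    (B : ℝ) (hB : ∀ t, -B ≤ q t) : ∀ t, q t = 0 := by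
  have h0 : q 0 = 0 := by have := hq 0 0; simp at this; linarith
  have hnat : ∀ (k : ℕ) (t : ℝ), q ((k : ℝ) * t) = k * q t := by
    intro k
    induction k with
    | zero => intro t; simpa using h0
    | succ m ih =>
      intro t
      have : ((m : ℝ) + 1) * t = (m : ℝ) * t + t := by ring
      push_cast
      rw [this, hq, ih]; ring
  intro t
  by_contra ht
  -- find s with q s < 0
  have hneg : ∃ s, q s < 0 := by
    rcases lt_or_gt_of_ne ht with h | h
    · exact ⟨t, h⟩
    · refine ⟨-t, ?_⟩
      have := hq t (-t); simp [h0] at this; linarith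
  obtain ⟨s, hs⟩ := hneg
  obtain ⟨k, hk⟩ := exists_nat_gt (B / (-q s))
  have hqs : 0 < -q s := by linarith
  have : B < k * (-q s) := by
    rw [div_lt_iff₀ hqs] at hk; linarith
  have := hB ((k : ℝ) * s)
  rw [hnat] at this
  nlinarith

/-- An additive nonnegative function on ℝ≥0 is linear. -/
lemma add_hom_linear (g : ℝ → ℝ) (hadd : ∀ c d, 0 ≤ c → 0 ≤ d → g (c + d) = g c + g d)
    (hpos : ∀ c, 0 ≤ c → 0 ≤ g c) : ∀ c, 0 ≤ c → g c = c * g 1 := by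
  have h0 : g 0 = 0 := by have := hadd 0 0 le_rfl le_rfl; simp at this; linarith
  have hnat : ∀ (k : ℕ) (c : ℝ), 0 ≤ c → g ((k : ℝ) * c) = k * g c := by
    intro k
    induction k with
    | zero => intro c _; simpa using h0
    | succ m ih =>
      intro c hc
      have e : ((m : ℝ) + 1) * c = (m : ℝ) * c + c := by ring
      push_cast
      rw [e, hadd _ _ (by positivity) hc, ih c hc]; ring
  have hmono : ∀ c d, 0 ≤ c → c ≤ d → g c ≤ g d := by
    intro c d hc hcd
    have : g d = g c + g (d - c) := by
      have := hadd c (d - c) hc (by linarith)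
      simpa using this
    have := hpos (d - c) (by linarith)
    linarith
  have hrat : ∀ p : ℚ, 0 ≤ p → g (p : ℝ) = (p : ℝ) * g 1 := by
    intro p hp
    have hden : (0:ℝ) < (p.den : ℝ) := by positivity
    have hnum : ((p.num.toNat : ℕ) : ℝ) = (p.num : ℝ) := by
      exact_mod_cast congrArg (fun z : ℤ => (z : ℝ)) (Int.toNat_of_nonneg (Rat.num_nonneg.2 hp))
    have e1 : ((p.den : ℝ)) * (p : ℝ) = (p.num.toNat : ℝ) := by
      rw [hnum, Rat.cast_def, mul_comm]
      field_simp
    have hp' : (0:ℝ) ≤ (p:ℝ) := by exact_mod_cast hp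
    have e2 : g ((p.den : ℝ) * (p : ℝ)) = (p.den : ℝ) * g (p : ℝ) := hnat p.den _ hp'
    have e3 : g ((p.num.toNat : ℝ)) = (p.num.toNat : ℝ) * g 1 := by
      have := hnat p.num.toNat 1 zero_le_one
      simpa using this
    rw [e1, e3] at e2
    have : g (p : ℝ) = (p.num.toNat : ℝ) / (p.den : ℝ) * g 1 := by
      field_simp at e2 ⊢
      linarith
    rw [this]
    congr 1
    rw [hnum, Rat.cast_def]
  intro c hc
  have hg1 : 0 ≤ g 1 := hpos 1 zero_le_one
  by_contra hne
  rcases lt_or_gt_of_ne hne with hlt | hgt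
  · -- g c < c * g 1 : pick rational q ∈ (g c / g 1, c)
    have hg1pos : 0 < g 1 := by
      rcases eq_or_lt_of_le hg1 with h | h
      · exfalso; rw [← h] at hlt; simp at hlt; have := hpos c hc; linarith
      · exact h
    have hlt2 : g c / g 1 < c := by rw [div_lt_iff₀ hg1pos]; linarith [mul_comm c (g 1)]
    obtain ⟨p, hp1, hp2⟩ := exists_rat_btwn hlt2
    have hp0 : (0:ℝ) ≤ (p:ℝ) :=
      le_trans (div_nonneg (hpos c hc) hg1pos.le) hp1.le
    have := hmono (p:ℝ) c hp0 hp2.le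
    rw [hrat p (by exact_mod_cast hp0)] at this
    have : g c / g 1 * g 1 < (p : ℝ) * g 1 := by
      apply mul_lt_mul_of_pos_right hp1 hg1pos
    rw [div_mul_cancel₀ _ (ne_of_gt hg1pos)] at this
    linarith [hmono (p:ℝ) c hp0 hp2.le, hrat p (by exact_mod_cast hp0)]
  · -- c * g 1 < g c : pick q ∈ (c, g c / g 1)
    have hg1pos : 0 < g 1 := by
      rcases eq_or_lt_of_le hg1 with h | h
      · exfalso
        -- g 1 = 0 ⇒ g q = 0 for rationals above c ⇒ g c ≤ 0 ⇒ g c = 0 = c * g 1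
        obtain ⟨p, hp1, hp2⟩ := exists_rat_btwn (lt_add_one c)
        have := hmono c (p:ℝ) hc hp1.le
        rw [hrat p (by exact_mod_cast (le_trans hc hp1.le : (0:ℝ) ≤ (p:ℝ)))] at this
        rw [← h] at this hgt
        simp at this hgt
        linarith
      · exact h
    have hlt2 : c < g c / g 1 := by rw [lt_div_iff₀ hg1pos]; linarith [mul_comm c (g 1)]
    obtain ⟨p, hp1, hp2⟩ := exists_rat_btwn hlt2
    have hp0 : (0:ℝ) ≤ (p:ℝ) := le_trans hc hp1.le
    have h1 := hmono c (p:ℝ) hc hp1.le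
    rw [hrat p (by exact_mod_cast hp0)] at h1
    have h2 : (p : ℝ) * g 1 < g c / g 1 * g 1 := mul_lt_mul_of_pos_right hp2 hg1pos
    rw [div_mul_cancel₀ _ (ne_of_gt hg1pos)] at h2
    linarith




lemma psd_vv (u : Fin n → ℝ) : (vecMulVec u u).PosSemidef := by
  refine Matrix.PosSemidef.of_dotProduct_mulVec_nonneg ?_ ?_
  · ext i j
    simp [conjTranspose_apply, vecMulVec_apply, mul_comm]
  · intro x
    have h1 : ∀ i, (vecMulVec u u *ᵥ x) i = u i * (u ⬝ᵥ x) := by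
      intro i
      simp [mulVec, dotProduct, vecMulVec_apply, Finset.mul_sum, mul_assoc]
    have : dotProduct (star x) (vecMulVec u u *ᵥ x) = (u ⬝ᵥ x) * (u ⬝ᵥ x) := by
      simp only [dotProduct, h1, star_trivial, Finset.sum_mul, Finset.mul_sum]
      rw [Finset.sum_comm]
      exact Finset.sum_congr rfl fun i _ => Finset.sum_congr rfl fun j _ => by ring
    rw [this]
    exact mul_self_nonneg _

lemma psd_smul {M : Matrix (Fin n) (Fin n) ℝ} (h : M.PosSemidef) {c : ℝ} (hc : 0 ≤ c) :
    (c • M).PosSemidef := by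
  refine Matrix.PosSemidef.of_dotProduct_mulVec_nonneg ?_ ?_
  · ext i j
    have := h.1
    have h2 : M j i = M i j := by
      conv_lhs => rw [← this]
      simp [conjTranspose_apply]
    simp [conjTranspose_apply, h2]
  · intro x
    have : dotProduct (star x) ((c • M) *ᵥ x) = c * dotProduct (star x) (M *ᵥ x) := by
      simp [smul_mulVec, dotProduct_smul]
    rw [this]
    exact mul_nonneg hc (h.dotProduct_mulVec_nonneg x)

lemma vv_smul (t : ℝ) (u : Fin n → ℝ) :
    vecMulVec (t • u) (t • u) = (t ^ 2) • vecMulVec u u := by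
  ext i j; simp [vecMulVec_apply]; ring

lemma vv_zero : vecMulVec (0 : Fin n → ℝ) (0 : Fin n → ℝ) = (0 : Matrix (Fin n) (Fin n) ℝ) := by
  ext i j; simp [vecMulVec_apply]

lemma vv_parallelogram (w v : Fin n → ℝ) :
    vecMulVec (w + v) (w + v) + vecMulVec (w - v) (w - v)
      = (vecMulVec w w + vecMulVec w w) + (vecMulVec v v + vecMulVec v v) := by
  ext i j; simp [vecMulVec_apply]; ring

lemma rank_vv {u : Fin n → ℝ} (hu : u ≠ 0) : (vecMulVec u u).rank = 1 := by
  have hrange : LinearMap.range (vecMulVec u u).mulVecLin = ℝ ∙ u := by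
    apply le_antisymm
    · rintro y ⟨x, rfl⟩
      have : (vecMulVec u u).mulVecLin x = (u ⬝ᵥ x) • u := by
        ext i
        simp only [mulVecLin_apply, mulVec, dotProduct, vecMulVec_apply, Pi.smul_apply,
          smul_eq_mul, Finset.sum_mul, Finset.mul_sum]
        exact Finset.sum_congr rfl fun j _ => by ring
      rw [this]
      exact Submodule.smul_mem _ _ (Submodule.mem_span_singleton_self u)
    · rw [Submodule.span_singleton_le_iff_mem]
      have huu : (0:ℝ) < u ⬝ᵥ u := by
        have : u ⬝ᵥ u = ∑ i, u i * u i := rfl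
        have hne : ∃ i, u i ≠ 0 := by
          by_contra h
          push_neg at h
          exact hu (funext h)
        obtain ⟨i, hi⟩ := hne
        rw [this]
        apply Finset.sum_pos' (fun j _ => mul_self_nonneg _)
        exact ⟨i, Finset.mem_univ i, mul_self_pos.mpr hi⟩
      refine ⟨(u ⬝ᵥ u)⁻¹ • u, ?_⟩
      have : (vecMulVec u u).mulVecLin ((u ⬝ᵥ u)⁻¹ • u) = ((u ⬝ᵥ u)⁻¹ * (u ⬝ᵥ u)) • u := by
        ext i
        simp only [mulVecLin_apply, mulVec, dotProduct, vecMulVec_apply, Pi.smul_apply,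
          smul_eq_mul, Finset.sum_mul, Finset.mul_sum]
        exact Finset.sum_congr rfl fun j _ => by ring
      rw [this, inv_mul_cancel₀ (ne_of_gt huu), one_smul]
  rw [Matrix.rank, hrange]
  exact finrank_span_singleton hu

open scoped MatrixOrder in
lemma psd_decomp {A : Matrix (Fin n) (Fin n) ℝ} (hA : A.PosSemidef) :
    ∃ w : Fin n → Fin n → ℝ, A = ∑ k, vecMulVec (w k) (w k) := by
  obtain ⟨X, hX, -, hXX⟩ := CFC.exists_sqrt_of_isSelfAdjoint_of_quasispectrumRestricts (a := A)
    hA.1 (QuasispectrumRestricts.nnreal_of_nonneg hA.nonneg)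
  refine ⟨fun k p => X p k, ?_⟩
  have hs : X * X = A := hXX
  have hherm : X.IsHermitian := hX
  ext p q
  conv_lhs => rw [← hs]
  rw [Matrix.mul_apply]
  rw [Matrix.sum_apply]
  congr 1; ext k
  have : X k q = X q k := by
    conv_lhs => rw [← hherm]
    simp [conjTranspose_apply]
  rw [vecMulVec_apply, this]


section F1
variable {F : (Fin n → Matrix (Fin n) (Fin n) ℝ) → ℝ}



lemma psd_sum {ι : Type*} (s : Finset ι) (M : ι → Matrix (Fin n) (Fin n) ℝ)
    (hM : ∀ k, (M k).PosSemidef) : (∑ k ∈ s, M k).PosSemidef := by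
  classical
  induction s using Finset.induction_on with
  | empty => simpa using Matrix.PosSemidef.zero
  | @insert k' s' hk' ih' =>
    rw [Finset.sum_insert hk']
    exact (hM k').add ih'

lemma psd_update {A : Fin n → Matrix (Fin n) (Fin n) ℝ} {i : Fin n}
    {M : Matrix (Fin n) (Fin n) ℝ} (hA : ∀ j, (A j).PosSemidef) (hM : M.PosSemidef) :
    ∀ j, ((Function.update A i M) j).PosSemidef := by
  intro j
  rcases eq_or_ne j i with rfl | h
  · simpa using hM
  · rw [Function.update_of_ne h]; exact hA j


lemma F_update_zero
    (hadd : ∀ (A : Fin n → Matrix (Fin n) (Fin n) ℝ) (i : Fin n)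
      (B : Matrix (Fin n) (Fin n) ℝ), (∀ j, (A j).PosSemidef) → B.PosSemidef →
      F (Function.update A i (A i + B)) = F A + F (Function.update A i B))
    {A : Fin n → Matrix (Fin n) (Fin n) ℝ} (hA : ∀ j, (A j).PosSemidef) (i : Fin n) :
    F (Function.update A i 0) = 0 := by
  have := hadd A i 0 hA Matrix.PosSemidef.zero
  simp only [add_zero, Function.update_eq_self] at this
  linarith

lemma F_zero_slot
    (hadd : ∀ (A : Fin n → Matrix (Fin n) (Fin n) ℝ) (i : Fin n)
      (B : Matrix (Fin n) (Fin n) ℝ), (∀ j, (A j).PosSemidef) → B.PosSemidef →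
      F (Function.update A i (A i + B)) = F A + F (Function.update A i B))
    {A : Fin n → Matrix (Fin n) (Fin n) ℝ} (hA : ∀ j, (A j).PosSemidef) {i : Fin n}
    (hi : A i = 0) : F A = 0 := by
  have h1 : A = Function.update A i 0 := by
    funext j
    rcases eq_or_ne j i with rfl | h
    · simpa using hi
    · rw [Function.update_of_ne h]
  rw [h1]
  exact F_update_zero hadd hA i

lemma F_add_slot
    (hadd : ∀ (A : Fin n → Matrix (Fin n) (Fin n) ℝ) (i : Fin n)
      (B : Matrix (Fin n) (Fin n) ℝ), (∀ j, (A j).PosSemidef) → B.PosSemidef →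
      F (Function.update A i (A i + B)) = F A + F (Function.update A i B))
    {A : Fin n → Matrix (Fin n) (Fin n) ℝ} (hA : ∀ j, (A j).PosSemidef) (i : Fin n)
    {M N : Matrix (Fin n) (Fin n) ℝ} (hM : M.PosSemidef) (hN : N.PosSemidef) :
    F (Function.update A i (M + N))
      = F (Function.update A i M) + F (Function.update A i N) := by
  have := hadd (Function.update A i M) i N (psd_update hA hM) hN
  simpa [Function.update_idem] using this

lemma F_sum_slot
    (hadd : ∀ (A : Fin n → Matrix (Fin n) (Fin n) ℝ) (i : Fin n)
      (B : Matrix (Fin n) (Fin n) ℝ), (∀ j, (A j).PosSemidef) → B.PosSemidef →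
      F (Function.update A i (A i + B)) = F A + F (Function.update A i B))
    {A : Fin n → Matrix (Fin n) (Fin n) ℝ} (hA : ∀ j, (A j).PosSemidef) (i : Fin n)
    {ι : Type*} [DecidableEq ι] (s : Finset ι) (M : ι → Matrix (Fin n) (Fin n) ℝ)
    (hM : ∀ k, (M k).PosSemidef) :
    F (Function.update A i (∑ k ∈ s, M k)) = ∑ k ∈ s, F (Function.update A i (M k)) := by
  classical
  induction s using Finset.induction_on with
  | empty => simpa using F_update_zero hadd hA i
  | @insert k s hk ih =>
    have hsum : (∑ k ∈ s, M k).PosSemidef := psd_sum s M hM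
    rw [Finset.sum_insert hk, Finset.sum_insert hk]
    rw [F_add_slot hadd hA i (hM k) hsum, ih]

lemma F_smul_slot
    (hnonneg : ∀ A : Fin n → Matrix (Fin n) (Fin n) ℝ,
      (∀ j, (A j).PosSemidef) → 0 ≤ F A)
    (hadd : ∀ (A : Fin n → Matrix (Fin n) (Fin n) ℝ) (i : Fin n)
      (B : Matrix (Fin n) (Fin n) ℝ), (∀ j, (A j).PosSemidef) → B.PosSemidef →
      F (Function.update A i (A i + B)) = F A + F (Function.update A i B))
    {A : Fin n → Matrix (Fin n) (Fin n) ℝ} (hA : ∀ j, (A j).PosSemidef) (i : Fin n)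
    {M : Matrix (Fin n) (Fin n) ℝ} (hM : M.PosSemidef) {c : ℝ} (hc : 0 ≤ c) :
    F (Function.update A i (c • M)) = c * F (Function.update A i M) := by
  have key := add_hom_linear (fun c => F (Function.update A i (c • M)))
    (fun c d hc hd => by
      rw [add_smul]
      exact F_add_slot hadd hA i (psd_smul hM hc) (psd_smul hM hd))
    (fun c hc => hnonneg _ (psd_update hA (psd_smul hM hc)))
    c hc
  simpa only [one_smul] using key

lemma F_scale_all
    (hnonneg : ∀ A : Fin n → Matrix (Fin n) (Fin n) ℝ,
      (∀ j, (A j).PosSemidef) → 0 ≤ F A)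
    (hadd : ∀ (A : Fin n → Matrix (Fin n) (Fin n) ℝ) (i : Fin n)
      (B : Matrix (Fin n) (Fin n) ℝ), (∀ j, (A j).PosSemidef) → B.PosSemidef →
      F (Function.update A i (A i + B)) = F A + F (Function.update A i B))
    {A : Fin n → Matrix (Fin n) (Fin n) ℝ} (hA : ∀ j, (A j).PosSemidef)
    {c : Fin n → ℝ} (hc : ∀ m, 0 ≤ c m) :
    F (fun m => c m • A m) = (∏ m, c m) * F A := by
  classical
  have main : ∀ s : Finset (Fin n),
      F (fun m => if m ∈ s then c m • A m else A m) = (∏ m ∈ s, c m) * F A := by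
    intro s
    induction s using Finset.induction_on with
    | empty => simp
    | @insert k s hk ih =>
      have htuple : (fun m => if m ∈ insert k s then c m • A m else A m)
          = Function.update (fun m => if m ∈ s then c m • A m else A m) k (c k • A k) := by
        funext m
        rcases eq_or_ne m k with rfl | h
        · simp [hk]
        · simp [Function.update_of_ne h, Finset.mem_insert, h]
      have hPSD : ∀ j, ((fun m => if m ∈ s then c m • A m else A m) j).PosSemidef := by
        intro j
        by_cases hj : j ∈ s
        · simpa [hj] using psd_smul (hA j) (hc j)
        · simpa [hj] using hA j
      have hks : (fun m => if m ∈ s then c m • A m else A m) k = A k := by simp [hk]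
      rw [htuple]
      have := F_smul_slot hnonneg hadd hPSD k (hA k) (hc k)
      rw [this]
      have : Function.update (fun m => if m ∈ s then c m • A m else A m) k (A k)
          = (fun m => if m ∈ s then c m • A m else A m) := by
        rw [← hks, Function.update_eq_self]
      rw [this, ih, Finset.prod_insert hk]
      ring
  have := main Finset.univ
  simpa using this

end F1

section Wrappers
variable {F : (Fin n → Matrix (Fin n) (Fin n) ℝ) → ℝ}

lemma F_zero_slot' (F : (Fin n → Matrix (Fin n) (Fin n) ℝ) → ℝ)
    (hadd : ∀ (A : Fin n → Matrix (Fin n) (Fin n) ℝ) (i : Fin n)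
      (B : Matrix (Fin n) (Fin n) ℝ), (∀ j, (A j).PosSemidef) → B.PosSemidef →
      F (Function.update A i (A i + B)) = F A + F (Function.update A i B))
    {A : Fin n → Matrix (Fin n) (Fin n) ℝ} (hA : ∀ j, (A j).PosSemidef) {i : Fin n}
    (hi : A i = 0) : F A = 0 := F_zero_slot hadd hA hi

lemma F_add_slot' (F : (Fin n → Matrix (Fin n) (Fin n) ℝ) → ℝ)
    (hadd : ∀ (A : Fin n → Matrix (Fin n) (Fin n) ℝ) (i : Fin n)
      (B : Matrix (Fin n) (Fin n) ℝ), (∀ j, (A j).PosSemidef) → B.PosSemidef →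
      F (Function.update A i (A i + B)) = F A + F (Function.update A i B))
    {A : Fin n → Matrix (Fin n) (Fin n) ℝ} (hA : ∀ j, (A j).PosSemidef) (i : Fin n)
    {M N : Matrix (Fin n) (Fin n) ℝ} (hM : M.PosSemidef) (hN : N.PosSemidef) :
    F (Function.update A i (M + N))
      = F (Function.update A i M) + F (Function.update A i N) :=
  F_add_slot hadd hA i hM hN

lemma F_scale_all' (F : (Fin n → Matrix (Fin n) (Fin n) ℝ) → ℝ)
    (hnonneg : ∀ A : Fin n → Matrix (Fin n) (Fin n) ℝ,
      (∀ j, (A j).PosSemidef) → 0 ≤ F A)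
    (hadd : ∀ (A : Fin n → Matrix (Fin n) (Fin n) ℝ) (i : Fin n)
      (B : Matrix (Fin n) (Fin n) ℝ), (∀ j, (A j).PosSemidef) → B.PosSemidef →
      F (Function.update A i (A i + B)) = F A + F (Function.update A i B))
    {A : Fin n → Matrix (Fin n) (Fin n) ℝ} (hA : ∀ j, (A j).PosSemidef)
    {c : Fin n → ℝ} (hc : ∀ m, 0 ≤ c m) :
    F (fun m => c m • A m) = (∏ m, c m) * F A := F_scale_all hnonneg hadd hA hc

end Wrappers

section F2
variable {F : (Fin n → Matrix (Fin n) (Fin n) ℝ) → ℝ}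



/-- key: tuples of outer products of updated vector families -/
lemma vv_tuple_update (x : Fin n → Fin n → ℝ) (i : Fin n) (z : Fin n → ℝ) :
    (fun k => vecMulVec (Function.update x i z k) (Function.update x i z k))
      = Function.update (fun k => vecMulVec (x k) (x k)) i (vecMulVec z z) := by
  funext k
  rcases eq_or_ne k i with rfl | h
  · simp
  · simp [Function.update_of_ne h]

/-- If one column is a multiple of another, `f` vanishes. -/
lemma f_prop_vanish
    (hadd : ∀ (A : Fin n → Matrix (Fin n) (Fin n) ℝ) (i : Fin n)
      (B : Matrix (Fin n) (Fin n) ℝ), (∀ j, (A j).PosSemidef) → B.PosSemidef →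
      F (Function.update A i (A i + B)) = F A + F (Function.update A i B))
    (hvanish : ∀ A : Fin n → Matrix (Fin n) (Fin n) ℝ,
      (∀ j, (A j).PosSemidef) →
      (∃ i j, i ≠ j ∧ (A i).rank = 1 ∧ (A j).rank = 1 ∧
        ∃ c : ℝ, 0 < c ∧ A i = c • A j) →
      F A = 0)
    {x : Fin n → Fin n → ℝ} {i j : Fin n} (hij : i ≠ j) {t : ℝ} (hxi : x i = t • x j) :
    F (fun k => vecMulVec (x k) (x k)) = 0 := by
  set A := fun k => vecMulVec (x k) (x k) with hAdef
  have hA : ∀ k, (A k).PosSemidef := fun k => psd_vv _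
  by_cases hxj : x j = 0
  · exact F_zero_slot' F hadd hA (i := j) (by simp [hAdef, hxj, vv_zero])
  by_cases ht : t = 0
  · refine F_zero_slot' F hadd hA (i := i) ?_
    simp [hAdef, hxi, ht, vv_zero]
  · refine hvanish A hA ⟨i, j, hij, ?_, rank_vv hxj, t ^ 2, by positivity, ?_⟩
    · have : x i ≠ 0 := by rw [hxi]; exact smul_ne_zero ht hxj
      exact rank_vv this
    · show vecMulVec (x i) (x i) = t ^ 2 • vecMulVec (x j) (x j)
      rw [hxi, vv_smul]

/-- `f` is invariant under adding a multiple of one column to another. -/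
lemma f_transvection
    (hnonneg : ∀ A : Fin n → Matrix (Fin n) (Fin n) ℝ,
      (∀ j, (A j).PosSemidef) → 0 ≤ F A)
    (hadd : ∀ (A : Fin n → Matrix (Fin n) (Fin n) ℝ) (i : Fin n)
      (B : Matrix (Fin n) (Fin n) ℝ), (∀ j, (A j).PosSemidef) → B.PosSemidef →
      F (Function.update A i (A i + B)) = F A + F (Function.update A i B))
    (hvanish : ∀ A : Fin n → Matrix (Fin n) (Fin n) ℝ,
      (∀ j, (A j).PosSemidef) →
      (∃ i j, i ≠ j ∧ (A i).rank = 1 ∧ (A j).rank = 1 ∧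
        ∃ c : ℝ, 0 < c ∧ A i = c • A j) →
      F A = 0)
    {x : Fin n → Fin n → ℝ} {i j : Fin n} (hij : i ≠ j) (t : ℝ) :
    F (fun k => vecMulVec (Function.update x i (x i + t • x j) k)
        (Function.update x i (x i + t • x j) k))
      = F (fun k => vecMulVec (x k) (x k)) := by
  classical
  set A := fun k => vecMulVec (x k) (x k) with hAdef
  have hA : ∀ k, (A k).PosSemidef := fun k => psd_vv _
  set p : ℝ → ℝ := fun s => F (Function.update A i
    (vecMulVec (x i + s • x j) (x i + s • x j))) with hpdef
  have hptuple : ∀ s : ℝ, F (fun k => vecMulVec (Function.update x i (x i + s • x j) k)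
      (Function.update x i (x i + s • x j) k)) = p s := by
    intro s; rw [vv_tuple_update]
  have hp0 : p 0 = F A := by
    have : x i + (0:ℝ) • x j = x i := by module
    rw [hpdef]; simp only [this]
    rw [show Function.update A i (vecMulVec (x i) (x i)) = A from Function.update_eq_self i A]
  have hpnonneg : ∀ s, 0 ≤ p s :=
    fun s => hnonneg _ (psd_update hA (psd_vv _))
  have hvan0 : ∀ s : ℝ, F (Function.update A i (vecMulVec (s • x j) (s • x j))) = 0 := by
    intro s
    have := f_prop_vanish (F := F) hadd hvanish (x := Function.update x i (s • x j))
      (i := i) (j := j) hij (t := s)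
      (by rw [Function.update_self, Function.update_of_ne hij.symm])
    rw [vv_tuple_update] at this
    exact this
  have identity : ∀ s u : ℝ, p (s + u) + p (s - u) = 2 * p s := by
    intro s u
    have e1 : x i + (s + u) • x j = (x i + s • x j) + u • x j := by module
    have e2 : x i + (s - u) • x j = (x i + s • x j) - u • x j := by module
    set w := x i + s • x j with hw
    set v := x j with hv
    have lhs1 : p (s + u) + p (s - u)
        = F (Function.update A i (vecMulVec (w + u • v) (w + u • v)
            + vecMulVec (w - u • v) (w - u • v))) := by
      rw [hpdef]; simp only [e1, e2]
      rw [F_add_slot' F hadd hA i (psd_vv _) (psd_vv _)]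
    have lhs2 : vecMulVec (w + u • v) (w + u • v) + vecMulVec (w - u • v) (w - u • v)
        = (vecMulVec w w + vecMulVec w w)
          + (vecMulVec (u • v) (u • v) + vecMulVec (u • v) (u • v)) :=
      vv_parallelogram w (u • v)
    rw [lhs1, lhs2]
    rw [F_add_slot' F hadd hA i ((psd_vv _).add (psd_vv _)) ((psd_vv _).add (psd_vv _))]
    rw [F_add_slot' F hadd hA i (psd_vv _) (psd_vv _)]
    rw [F_add_slot' F hadd hA i (psd_vv _) (psd_vv _)]
    rw [hvan0 u]
    rw [hpdef]
    ring
  -- q is additive and bounded below, hence zero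
  set q : ℝ → ℝ := fun s => p s - p 0 with hqdef
  have hqadd : ∀ s u, q (s + u) = q s + q u := by
    intro s u
    have h1 := identity s u
    have h2 := identity u s
    have h3 := identity 0 (s - u)
    have e1 : u + s = s + u := by ring
    have e2 : (0:ℝ) + (s - u) = s - u := by ring
    have e3 : (0:ℝ) - (s - u) = u - s := by ring
    rw [e1] at h2
    rw [e2, e3] at h3
    simp only [hqdef]
    linarith
  have hqbdd : ∀ s, -(p 0) ≤ q s := fun s => by
    have := hpnonneg s; simp only [hqdef]; linarith
  have hq := cauchy_bounded_zero q hqadd (p 0) hqbdd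
  rw [hptuple t]
  have := hq t
  simp only [hqdef] at this
  rw [← hp0]
  linarith

end F2

section Wrappers2
variable {n : ℕ}

lemma f_transvection' (F : (Fin n → Matrix (Fin n) (Fin n) ℝ) → ℝ)
    (hnonneg : ∀ A : Fin n → Matrix (Fin n) (Fin n) ℝ,
      (∀ j, (A j).PosSemidef) → 0 ≤ F A)
    (hadd : ∀ (A : Fin n → Matrix (Fin n) (Fin n) ℝ) (i : Fin n)
      (B : Matrix (Fin n) (Fin n) ℝ), (∀ j, (A j).PosSemidef) → B.PosSemidef →
      F (Function.update A i (A i + B)) = F A + F (Function.update A i B))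
    (hvanish : ∀ A : Fin n → Matrix (Fin n) (Fin n) ℝ,
      (∀ j, (A j).PosSemidef) →
      (∃ i j, i ≠ j ∧ (A i).rank = 1 ∧ (A j).rank = 1 ∧
        ∃ c : ℝ, 0 < c ∧ A i = c • A j) →
      F A = 0)
    {x : Fin n → Fin n → ℝ} {i j : Fin n} (hij : i ≠ j) (t : ℝ) :
    F (fun k => vecMulVec (Function.update x i (x i + t • x j) k)
        (Function.update x i (x i + t • x j) k))
      = F (fun k => vecMulVec (x k) (x k)) :=
  f_transvection hnonneg hadd hvanish hij t

end Wrappers2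

section F3
variable {F : (Fin n → Matrix (Fin n) (Fin n) ℝ) → ℝ}



/-- rewriting a multi-add as a single transvection on the partially updated family -/
lemma multiadd_step {x : Fin n → Fin n → ℝ} {i m : Fin n} (him : i ≠ m)
    {s : Finset (Fin n)} (hm : m ∉ s) (t : Fin n → ℝ) :
    Function.update x i (x i + ∑ m' ∈ insert m s, t m' • x m')
      = Function.update (Function.update x i (x i + ∑ m' ∈ s, t m' • x m')) i
          ((Function.update x i (x i + ∑ m' ∈ s, t m' • x m')) i
            + t m • (Function.update x i (x i + ∑ m' ∈ s, t m' • x m')) m) := by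
  rw [Function.update_idem, Function.update_self, Function.update_of_ne him.symm,
    Finset.sum_insert hm]
  congr 1
  abel

lemma f_multiadd
    (hnonneg : ∀ A : Fin n → Matrix (Fin n) (Fin n) ℝ,
      (∀ j, (A j).PosSemidef) → 0 ≤ F A)
    (hadd : ∀ (A : Fin n → Matrix (Fin n) (Fin n) ℝ) (i : Fin n)
      (B : Matrix (Fin n) (Fin n) ℝ), (∀ j, (A j).PosSemidef) → B.PosSemidef →
      F (Function.update A i (A i + B)) = F A + F (Function.update A i B))
    (hvanish : ∀ A : Fin n → Matrix (Fin n) (Fin n) ℝ,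
      (∀ j, (A j).PosSemidef) →
      (∃ i j, i ≠ j ∧ (A i).rank = 1 ∧ (A j).rank = 1 ∧
        ∃ c : ℝ, 0 < c ∧ A i = c • A j) →
      F A = 0)
    {x : Fin n → Fin n → ℝ} {i : Fin n} (t : Fin n → ℝ) (s : Finset (Fin n)) (his : i ∉ s) :
    F (fun k => vecMulVec (Function.update x i (x i + ∑ m ∈ s, t m • x m) k)
        (Function.update x i (x i + ∑ m ∈ s, t m • x m) k))
      = F (fun k => vecMulVec (x k) (x k)) := by
  classical
  induction s using Finset.induction_on with
  | empty => simp
  | @insert m s hm ih =>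
    have him : i ≠ m := fun h => his (by rw [h]; exact Finset.mem_insert_self m s)
    have his' : i ∉ s := fun h => his (Finset.mem_insert_of_mem h)
    rw [multiadd_step him hm t]
    rw [f_transvection' F hnonneg hadd hvanish him (t m)]
    exact ih his'

lemma det_multiadd {x : Fin n → Fin n → ℝ} {i : Fin n} (t : Fin n → ℝ)
    (s : Finset (Fin n)) (his : i ∉ s) :
    (Matrix.of (Function.update x i (x i + ∑ m ∈ s, t m • x m))).det
      = (Matrix.of x).det := by
  classical
  induction s using Finset.induction_on with
  | empty => simp
  | @insert m s hm ih =>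
    have him : i ≠ m := fun h => his (by rw [h]; exact Finset.mem_insert_self m s)
    have his' : i ∉ s := fun h => his (Finset.mem_insert_of_mem h)
    rw [multiadd_step him hm t]
    set y := Function.update x i (x i + ∑ m' ∈ s, t m' • x m') with hy
    have hrow : (Matrix.of (Function.update y i (y i + t m • y m)))
        = (Matrix.of y).updateRow i ((Matrix.of y) i + t m • (Matrix.of y) m) := by
      ext p q
      rw [Matrix.updateRow_apply]
      rcases eq_or_ne p i with rfl | h
      · simp
      · simp [Function.update_of_ne h, h]
    rw [hrow, Matrix.det_updateRow_add_smul_self _ him (t m)]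
    exact ih his'

lemma pivot_combo {c : Fin n → ℝ} {x : Fin n → Fin n → ℝ} {v : Fin n → ℝ} {k : Fin n}
    (hsum : ∑ m, c m • x m = v) (hck : c k ≠ 0) :
    x k + ∑ m ∈ Finset.univ.erase k, (c m / c k) • x m = (c k)⁻¹ • v := by
  rw [← hsum, Finset.smul_sum]
  have key : ∀ m : Fin n, (c k)⁻¹ • (c m • x m) = ((c k)⁻¹ * c m) • x m := by
    intro m; rw [smul_smul]
  simp only [key]
  rw [← Finset.add_sum_erase _ (fun m => ((c k)⁻¹ * c m) • x m) (Finset.mem_univ k)]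
  rw [inv_mul_cancel₀ hck, one_smul]
  congr 1
  refine Finset.sum_congr rfl fun m _ => ?_
  rw [div_eq_inv_mul]

lemma sum_update_pair {k m₀ : Fin n} (hkm : k ≠ m₀) (c : Fin n → ℝ)
    (x : Fin n → Fin n → ℝ) (hck : c k = 0) :
    ∑ m, (Function.update c k (- c m₀)) m • (Function.update x m₀ (x m₀ + x k)) m
      = ∑ m, c m • x m := by
  classical
  have hterm : ∀ m : Fin n, (Function.update c k (- c m₀)) m
        • (Function.update x m₀ (x m₀ + x k)) m
      = c m • x m + ((if m = k then (- c m₀) • x k else 0)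
          + (if m = m₀ then (c m₀) • x k else 0)) := by
    intro m
    rcases eq_or_ne m k with rfl | h1
    · rw [Function.update_self, Function.update_of_ne hkm, if_pos rfl, if_neg hkm, hck]
      simp
    · rcases eq_or_ne m m₀ with rfl | h2
      · rw [Function.update_of_ne h1, Function.update_self, if_neg h1, if_pos rfl]
        rw [smul_add]
        abel
      · rw [Function.update_of_ne h1, Function.update_of_ne h2, if_neg h1, if_neg h2]
        simp
  simp only [hterm]
  rw [Finset.sum_add_distrib, Finset.sum_add_distrib]
  rw [Finset.sum_ite_eq' Finset.univ k (fun _ => (- c m₀) • x k)]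
  rw [Finset.sum_ite_eq' Finset.univ m₀ (fun _ => (c m₀) • x k)]
  simp

end F3

section Wrappers3
variable {n : ℕ}

lemma f_multiadd' (F : (Fin n → Matrix (Fin n) (Fin n) ℝ) → ℝ)
    (hnonneg : ∀ A : Fin n → Matrix (Fin n) (Fin n) ℝ,
      (∀ j, (A j).PosSemidef) → 0 ≤ F A)
    (hadd : ∀ (A : Fin n → Matrix (Fin n) (Fin n) ℝ) (i : Fin n)
      (B : Matrix (Fin n) (Fin n) ℝ), (∀ j, (A j).PosSemidef) → B.PosSemidef →
      F (Function.update A i (A i + B)) = F A + F (Function.update A i B))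
    (hvanish : ∀ A : Fin n → Matrix (Fin n) (Fin n) ℝ,
      (∀ j, (A j).PosSemidef) →
      (∃ i j, i ≠ j ∧ (A i).rank = 1 ∧ (A j).rank = 1 ∧
        ∃ c : ℝ, 0 < c ∧ A i = c • A j) →
      F A = 0)
    {x : Fin n → Fin n → ℝ} {i : Fin n} (t : Fin n → ℝ) (s : Finset (Fin n)) (his : i ∉ s) :
    F (fun k => vecMulVec (Function.update x i (x i + ∑ m ∈ s, t m • x m) k)
        (Function.update x i (x i + ∑ m ∈ s, t m • x m) k))
      = F (fun k => vecMulVec (x k) (x k)) :=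
  f_multiadd hnonneg hadd hvanish t s his

end Wrappers3


lemma vecMul_of_eq_sum (v : Fin n → ℝ) (x : Fin n → Fin n → ℝ) :
    v ᵥ* (Matrix.of x) = ∑ m, v m • x m := by
  funext j
  rw [Finset.sum_apply]
  simp [Matrix.vecMul, dotProduct]

lemma of_diag_single (d : Fin n → ℝ) :
    (Matrix.of (fun m => d m • (Pi.single m 1 : Fin n → ℝ))) = Matrix.diagonal d := by
  ext p q
  rcases eq_or_ne p q with rfl | h
  · simp [Pi.single_apply]
  · simp [Pi.single_apply, h, Matrix.diagonal_apply_ne _ h]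


section F4
variable {F : (Fin n → Matrix (Fin n) (Fin n) ℝ) → ℝ}



variable
    (hnonneg : ∀ A : Fin n → Matrix (Fin n) (Fin n) ℝ,
      (∀ j, (A j).PosSemidef) → 0 ≤ F A)
    (hadd : ∀ (A : Fin n → Matrix (Fin n) (Fin n) ℝ) (i : Fin n)
      (B : Matrix (Fin n) (Fin n) ℝ), (∀ j, (A j).PosSemidef) → B.PosSemidef →
      F (Function.update A i (A i + B)) = F A + F (Function.update A i B))
    (hvanish : ∀ A : Fin n → Matrix (Fin n) (Fin n) ℝ,
      (∀ j, (A j).PosSemidef) →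
      (∃ i j, i ≠ j ∧ (A i).rank = 1 ∧ (A j).rank = 1 ∧
        ∃ c : ℝ, 0 < c ∧ A i = c • A j) →
      F A = 0)

include hnonneg hadd hvanish

lemma f_singular {x : Fin n → Fin n → ℝ} (hdet : (Matrix.of x).det = 0) :
    F (fun k => vecMulVec (x k) (x k)) = 0 := by
  classical
  obtain ⟨v, hv0, hvM⟩ := Matrix.exists_vecMul_eq_zero_iff.mpr hdet
  obtain ⟨i, hvi⟩ := Function.ne_iff.mp hv0
  have hvi' : v i ≠ 0 := by simpa using hvi
  have hsum : ∑ m, v m • x m = 0 := by rw [← vecMul_of_eq_sum]; exact hvM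
  have hcombo := pivot_combo (c := v) (x := x) (v := (0 : Fin n → ℝ)) hsum hvi'
  have hfx' := f_multiadd' F hnonneg hadd hvanish (x := x) (i := i)
    (fun m => v m / v i) (Finset.univ.erase i) (Finset.notMem_erase i _)
  rw [← hfx']
  refine F_zero_slot' F hadd (fun k => psd_vv _) (i := i) ?_
  show vecMulVec _ _ = 0
  rw [Function.update_self, hcombo]
  rw [smul_zero, vv_zero]

lemma f_reduce : ∀ (j : ℕ) (x : Fin n → Fin n → ℝ), (Matrix.of x).det ≠ 0 →
    (∀ m : Fin n, j ≤ (m : ℕ) → ∃ d : ℝ, x m = d • (Pi.single m 1 : Fin n → ℝ)) →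
    F (fun k => vecMulVec (x k) (x k))
      = F (fun k => vecMulVec (Pi.single k (1:ℝ)) (Pi.single k 1)) * ((Matrix.of x).det) ^ 2 := by
  classical
  intro j
  induction j with
  | zero =>
    intro x hdet hstd
    choose d hd using fun m => hstd m (Nat.zero_le _)
    have hx : x = fun m => d m • (Pi.single m 1 : Fin n → ℝ) := funext hd
    subst hx
    rw [of_diag_single, Matrix.det_diagonal]
    have htuple : (fun k => vecMulVec (d k • (Pi.single k 1 : Fin n → ℝ))
          (d k • (Pi.single k 1 : Fin n → ℝ)))
        = fun k => (d k ^ 2) • vecMulVec (Pi.single k 1 : Fin n → ℝ) (Pi.single k 1) := by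
      funext k; rw [vv_smul]
    rw [htuple]
    rw [F_scale_all' F hnonneg hadd (fun k => psd_vv _) (fun m => sq_nonneg (d m))]
    rw [← Finset.prod_pow]
    ring
  | succ j ih =>
    intro x hdet hstd
    by_cases hjn : n ≤ j
    · exact ih x hdet (fun m hm => absurd m.isLt (by omega))
    push_neg at hjn
    set k : Fin n := ⟨j, hjn⟩ with hk
    have hkval : (k : ℕ) = j := rfl
    -- solve the linear system for the coefficients of `e_k`
    have hinv : IsUnit (Matrix.of x).det := isUnit_iff_ne_zero.2 hdet
    set c : Fin n → ℝ := (Pi.single k 1 : Fin n → ℝ) ᵥ* (Matrix.of x)⁻¹ with hc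
    have hsolve : ∑ m, c m • x m = (Pi.single k 1 : Fin n → ℝ) := by
      rw [← vecMul_of_eq_sum, hc, Matrix.vecMul_vecMul, Matrix.nonsing_inv_mul _ hinv,
        Matrix.vecMul_one]
    have hpivot : ∃ m₀ : Fin n, (m₀ : ℕ) ≤ j ∧ c m₀ ≠ 0 := by
      by_contra hcon
      push_neg at hcon
      have h1 := congrFun hsolve k
      rw [Finset.sum_apply] at h1
      have hzero : ∀ m ∈ Finset.univ, (c m • x m) k = 0 := by
        intro m _
        by_cases hmj : (m : ℕ) ≤ j
        · rw [Pi.smul_apply, hcon m hmj, zero_smul]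
        · obtain ⟨d, hdm⟩ := hstd m (by omega)
          have hmk : k ≠ m := by
            intro h
            have : (m : ℕ) = j := by rw [← h]
            omega
          rw [Pi.smul_apply, hdm, Pi.smul_apply, Pi.single_apply, if_neg hmk, smul_zero,
            smul_zero]
      rw [Finset.sum_eq_zero hzero] at h1
      simp at h1
    obtain ⟨m₀, hm₀j, hm₀⟩ := hpivot
    -- get a configuration with nonzero pivot at `k`
    obtain ⟨x', c', hdet', hfx', hck', hsolve', hpres⟩ :
        ∃ (x' : Fin n → Fin n → ℝ) (c' : Fin n → ℝ),
          (Matrix.of x').det = (Matrix.of x).det ∧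
          F (fun m => vecMulVec (x' m) (x' m)) = F (fun m => vecMulVec (x m) (x m)) ∧
          c' k ≠ 0 ∧
          (∑ m, c' m • x' m = (Pi.single k 1 : Fin n → ℝ)) ∧
          (∀ m : Fin n, j < (m : ℕ) → x' m = x m) := by
      by_cases hck : c k ≠ 0
      · exact ⟨x, c, rfl, rfl, hck, hsolve, fun _ _ => rfl⟩
      push_neg at hck
      have hkm : k ≠ m₀ := by
        intro h
        rw [← h] at hm₀
        exact hm₀ hck
      refine ⟨Function.update x m₀ (x m₀ + x k), Function.update c k (- c m₀), ?_, ?_, ?_, ?_, ?_⟩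
      · have e : x m₀ + x k = x m₀ + ∑ m ∈ ({k} : Finset (Fin n)), (fun _ => (1:ℝ)) m • x m := by
          rw [Finset.sum_singleton, one_smul]
        rw [e]
        exact det_multiadd _ _ (by simp [hkm.symm])
      · have e : x m₀ + x k = x m₀ + ∑ m ∈ ({k} : Finset (Fin n)), (fun _ => (1:ℝ)) m • x m := by
          rw [Finset.sum_singleton, one_smul]
        rw [e]
        exact f_multiadd' F hnonneg hadd hvanish _ _ (by simp [hkm.symm])
      · rw [Function.update_self]
        simpa using hm₀
      · rw [sum_update_pair hkm c x hck]
        exact hsolve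
      · intro m hm
        have : m ≠ m₀ := by
          intro h
          rw [h] at hm
          omega
        rw [Function.update_of_ne this]
    -- final pivoting step at column k
    set x'' := Function.update x' k (x' k + ∑ m ∈ Finset.univ.erase k, (c' m / c' k) • x' m)
      with hx''
    have hfx'' : F (fun m => vecMulVec (x'' m) (x'' m)) = F (fun m => vecMulVec (x' m) (x' m)) :=
      f_multiadd' F hnonneg hadd hvanish _ _ (Finset.notMem_erase k _)
    have hdet'' : (Matrix.of x'').det = (Matrix.of x').det :=
      det_multiadd _ _ (Finset.notMem_erase k _)
    have hx''k : x'' k = (c' k)⁻¹ • (Pi.single k 1 : Fin n → ℝ) := by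
      rw [hx'', Function.update_self, pivot_combo hsolve' hck']
    have hstd'' : ∀ m : Fin n, j ≤ (m : ℕ) →
        ∃ d : ℝ, x'' m = d • (Pi.single m 1 : Fin n → ℝ) := by
      intro m hm
      rcases eq_or_ne m k with rfl | hmk
      · exact ⟨(c' k)⁻¹, hx''k⟩
      · have hmj : j < (m : ℕ) := by
          rcases Nat.lt_or_ge j (m : ℕ) with h | h
          · exact h
          · exfalso; exact hmk (Fin.ext (by omega))

        have : x'' m = x m := by
          rw [hx'', Function.update_of_ne hmk, hpres m hmj]
        rw [this]
        exact hstd m (by omega)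
    have hdetx'' : (Matrix.of x'').det ≠ 0 := by rw [hdet'', hdet']; exact hdet
    have := ih x'' hdetx'' hstd''
    rw [hfx'', hfx'] at this
    rw [hdet'', hdet'] at this
    exact this

lemma f_formula (x : Fin n → Fin n → ℝ) :
    F (fun k => vecMulVec (x k) (x k))
      = F (fun k => vecMulVec (Pi.single k (1:ℝ)) (Pi.single k 1)) * ((Matrix.of x).det) ^ 2 := by
  by_cases hdet : (Matrix.of x).det = 0
  · rw [hdet, f_singular hnonneg hadd hvanish hdet]
    ring
  · exact f_reduce hnonneg hadd hvanish n x hdet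
      (fun m hm => absurd m.isLt (by omega))

end F4


lemma md_matrix_update (A : Fin n → Matrix (Fin n) (Fin n) ℝ) (σ : Equiv.Perm (Fin n))
    (i : Fin n) (B : Matrix (Fin n) (Fin n) ℝ) :
    (Matrix.of fun p q => (Function.update A i B) (σ q) p q)
      = (Matrix.of fun p q => A (σ q) p q).updateCol (σ⁻¹ i) (fun p => B p (σ⁻¹ i)) := by
  ext p q
  rw [Matrix.updateCol_apply]
  rcases eq_or_ne q (σ⁻¹ i) with rfl | h
  · have hσ : σ (σ⁻¹ i) = i := by simp
    simp [hσ]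
  · have hσq : σ q ≠ i := by
      intro hh
      exact h (by rw [← hh]; simp)
    rw [if_neg h]; simp [Function.update_of_ne hσq]

lemma mixedDisc_add_slot (A : Fin n → Matrix (Fin n) (Fin n) ℝ) (i : Fin n)
    (M N : Matrix (Fin n) (Fin n) ℝ) :
    mixedDisc n (Function.update A i (M + N))
      = mixedDisc n (Function.update A i M) + mixedDisc n (Function.update A i N) := by
  unfold mixedDisc
  rw [← mul_add, ← Finset.sum_add_distrib]
  congr 1
  refine Finset.sum_congr rfl fun σ _ => ?_
  rw [md_matrix_update, md_matrix_update, md_matrix_update]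
  have : (fun p => (M + N) p (σ⁻¹ i)) = (fun p => M p (σ⁻¹ i)) + (fun p => N p (σ⁻¹ i)) := rfl
  rw [this, Matrix.det_updateCol_add]

lemma mixedDisc_zero_slot (A : Fin n → Matrix (Fin n) (Fin n) ℝ) (i : Fin n) :
    mixedDisc n (Function.update A i 0) = 0 := by
  unfold mixedDisc
  rw [mul_eq_zero]
  right
  refine Finset.sum_eq_zero fun σ _ => ?_
  refine Matrix.det_eq_zero_of_column_eq_zero (σ⁻¹ i) fun p => ?_
  have hσ : σ (σ⁻¹ i) = i := by simp
  simp [hσ]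

lemma mixedDisc_sum_slot (A : Fin n → Matrix (Fin n) (Fin n) ℝ) (i : Fin n)
    {ι : Type*} [DecidableEq ι] (s : Finset ι) (M : ι → Matrix (Fin n) (Fin n) ℝ) :
    mixedDisc n (Function.update A i (∑ k ∈ s, M k))
      = ∑ k ∈ s, mixedDisc n (Function.update A i (M k)) := by
  classical
  induction s using Finset.induction_on with
  | empty => simpa using mixedDisc_zero_slot A i
  | @insert k s hk ih =>
    rw [Finset.sum_insert hk, Finset.sum_insert hk, mixedDisc_add_slot, ih]

lemma mixedDisc_rank_one (x : Fin n → Fin n → ℝ) :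
    mixedDisc n (fun k => vecMulVec (x k) (x k))
      = ((n.factorial : ℝ))⁻¹ * ((Matrix.of x).det) ^ 2 := by
  unfold mixedDisc
  congr 1
  have hterm : ∀ σ : Equiv.Perm (Fin n),
      (Matrix.of fun p q => vecMulVec (x (σ q)) (x (σ q)) p q).det
        = ((Equiv.Perm.sign σ : ℤ) : ℝ) * (Matrix.of x).det * ∏ q, x (σ q) q := by
    intro σ
    have hfact : (Matrix.of fun p q => vecMulVec (x (σ q)) (x (σ q)) p q)
        = ((Matrix.of fun p q => x q p).submatrix id σ) * Matrix.diagonal (fun q => x (σ q) q) := by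
      ext p q
      rw [Matrix.mul_diagonal]
      simp [vecMulVec_apply, Matrix.submatrix_apply]
    rw [hfact, Matrix.det_mul, Matrix.det_diagonal, Matrix.det_permute']
    have : (Matrix.of fun p q => x q p) = (Matrix.of x)ᵀ := rfl
    rw [this, Matrix.det_transpose]
  simp only [hterm]
  have hdet : (Matrix.of x).det = ∑ σ : Equiv.Perm (Fin n),
      ((Equiv.Perm.sign σ : ℤ) : ℝ) * ∏ q, x (σ q) q := by
    rw [Matrix.det_apply]
    refine Finset.sum_congr rfl fun σ _ => ?_
    rw [Units.smul_def, zsmul_eq_mul]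
    push_cast
    rfl
  calc ∑ σ : Equiv.Perm (Fin n), ((Equiv.Perm.sign σ : ℤ) : ℝ) * (Matrix.of x).det * ∏ q, x (σ q) q
      = (Matrix.of x).det * ∑ σ : Equiv.Perm (Fin n),
          ((Equiv.Perm.sign σ : ℤ) : ℝ) * ∏ q, x (σ q) q := by
        rw [Finset.mul_sum]
        exact Finset.sum_congr rfl fun σ _ => by ring
    _ = ((Matrix.of x).det) ^ 2 := by rw [← hdet]; ring


end MixedDiscAux

open Matrix Function Finset MixedDiscAux

/-- A characterization of the mixed discriminant: a nonnegative function of `n`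
positive semidefinite symmetric matrices which is additive in each variable and
vanishes whenever two of its arguments are proportional rank-one matrices is a
nonnegative multiple of the mixed discriminant. -/
theorem mixedDisc_characterization {n : ℕ} (hn : 1 ≤ n)
    (F : (Fin n → Matrix (Fin n) (Fin n) ℝ) → ℝ)
    (hnonneg : ∀ A : Fin n → Matrix (Fin n) (Fin n) ℝ,
      (∀ j, (A j).PosSemidef) → 0 ≤ F A)
    (hadd : ∀ (A : Fin n → Matrix (Fin n) (Fin n) ℝ) (i : Fin n)
      (B : Matrix (Fin n) (Fin n) ℝ), (∀ j, (A j).PosSemidef) → B.PosSemidef →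
      F (Function.update A i (A i + B)) = F A + F (Function.update A i B))
    (hvanish : ∀ A : Fin n → Matrix (Fin n) (Fin n) ℝ,
      (∀ j, (A j).PosSemidef) →
      (∃ i j, i ≠ j ∧ (A i).rank = 1 ∧ (A j).rank = 1 ∧
        ∃ c : ℝ, 0 < c ∧ A i = c • A j) →
      F A = 0) :
    ∃ a : ℝ, 0 ≤ a ∧ ∀ A : Fin n → Matrix (Fin n) (Fin n) ℝ,
      (∀ j, (A j).PosSemidef) → F A = a * mixedDisc n A := by
  classical
  set E : Fin n → Matrix (Fin n) (Fin n) ℝ :=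
    fun k => vecMulVec (Pi.single k (1:ℝ) : Fin n → ℝ) (Pi.single k 1) with hE
  refine ⟨(n.factorial : ℝ) * F E, ?_, ?_⟩
  · exact mul_nonneg (by positivity) (hnonneg E (fun k => psd_vv _))
  · have key : ∀ s : Finset (Fin n), ∀ A : Fin n → Matrix (Fin n) (Fin n) ℝ,
        (∀ j, (A j).PosSemidef) →
        (∀ j, j ∉ s → ∃ v : Fin n → ℝ, A j = vecMulVec v v) →
        F A = ((n.factorial : ℝ) * F E) * mixedDisc n A := by
      intro s
      induction s using Finset.induction_on with
      | empty =>
        intro A hA hrk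
        choose v hv using fun j => hrk j (Finset.notMem_empty j)
        have hAv : A = fun k => vecMulVec (v k) (v k) := funext hv
        rw [hAv, f_formula hnonneg hadd hvanish v, mixedDisc_rank_one v]
        have hfac : ((n.factorial : ℝ)) ≠ 0 := by positivity
        field_simp
        ring
      | @insert i s hi ih =>
        intro A hA hrk
        obtain ⟨w, hw⟩ := psd_decomp (hA i)
        have hupd : A = Function.update A i (∑ k, vecMulVec (w k) (w k)) := by
          rw [← hw, Function.update_eq_self]
        have hsum1 : F A = ∑ k, F (Function.update A i (vecMulVec (w k) (w k))) := by
          conv_lhs => rw [hupd]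
          exact F_sum_slot hadd hA i Finset.univ _ (fun k => psd_vv _)
        have hsum2 : mixedDisc n A
            = ∑ k, mixedDisc n (Function.update A i (vecMulVec (w k) (w k))) := by
          conv_lhs => rw [hupd]
          exact mixedDisc_sum_slot A i Finset.univ _
        rw [hsum1, hsum2, Finset.mul_sum]
        refine Finset.sum_congr rfl fun k _ => ?_
        refine ih _ (psd_update hA (psd_vv _)) ?_
        intro j hj
        rcases eq_or_ne j i with rfl | hji
        · exact ⟨w k, by rw [Function.update_self]⟩
        · rw [Function.update_of_ne hji]
          refine hrk j ?_
          rw [Finset.mem_insert]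
          push_neg
          exact ⟨hji, hj⟩
    intro A hA
    exact key Finset.univ A hA (fun j hj => absurd (Finset.mem_univ j) hj)
end

section
/- Let n ≥ 1 and let F : (ℳⁿ)ⁿ → ℝ be a nonnegative function which is additive in each variable, and suppose there is a constant c ≥ 0 such that F(A₁,…,Aₙ) ≤ c·D(A₁,…,Aₙ) for all A₁,…,Aₙ ∈ ℳⁿ. Then there exists a constant a ≥ 0 such that F(A₁,…,Aₙ) = a·D(A₁,…,Aₙ) for all A₁,…,Aₙ ∈ ℳⁿ. -/
open Matrix Function

namespace MDAux

abbrev Mat (n : ℕ) := Matrix (Fin n) (Fin n) ℝ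

variable {n : ℕ}

lemma psd_smul {A : Mat n} (hA : A.PosSemidef) {s : ℝ} (hs : 0 ≤ s) : (s • A).PosSemidef := by
  refine ⟨?_, fun x => ?_⟩
  · rw [Matrix.IsHermitian, Matrix.conjTranspose_smul, star_trivial, hA.1]
  · exact (hA.smul hs).2 x

lemma psd_r1 (v : Fin n → ℝ) : (Matrix.vecMulVec v v).PosSemidef := by
  have h := Matrix.posSemidef_conjTranspose_mul_self (Matrix.replicateRow Unit v)
  convert h using 1
  ext i j
  simp [Matrix.vecMulVec, Matrix.mul_apply, Matrix.replicateRow, mul_comm]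

lemma psd_sum {κ : Type*} (s : Finset κ) (B : κ → Mat n) (hB : ∀ k, (B k).PosSemidef) :
    (∑ k ∈ s, B k).PosSemidef := by
  classical
  induction s using Finset.induction_on with
  | empty => simpa using Matrix.PosSemidef.zero
  | insert _ _ hk ih => rw [Finset.sum_insert hk]; exact (hB _).add ih

section F

variable (F : (Fin n → Mat n) → ℝ)

def Nonneg : Prop := ∀ A : Fin n → Mat n, (∀ j, (A j).PosSemidef) → 0 ≤ F A

def Addi : Prop := ∀ (A : Fin n → Mat n) (i : Fin n) (B : Mat n),
  (∀ j, (A j).PosSemidef) → B.PosSemidef →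
  F (Function.update A i (A i + B)) = F A + F (Function.update A i B)

variable {F}

lemma psd_update {A : Fin n → Mat n} (hA : ∀ j, (A j).PosSemidef) {B : Mat n}
    (hB : B.PosSemidef) (i : Fin n) : ∀ j, ((Function.update A i B) j).PosSemidef := by
  intro j
  rcases eq_or_ne j i with rfl | h
  · simpa using hB
  · simpa [Function.update_of_ne h] using hA j

lemma F_add (hadd : Addi F) {A : Fin n → Mat n} (hA : ∀ j, (A j).PosSemidef)
    (i : Fin n) {B C : Mat n} (hB : B.PosSemidef) (hC : C.PosSemidef) :
    F (Function.update A i (B + C)) =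
      F (Function.update A i B) + F (Function.update A i C) := by
  have h := hadd (Function.update A i B) i C (psd_update hA hB i) hC
  simpa [Function.update_idem] using h

lemma F_zero (hadd : Addi F) {A : Fin n → Mat n} (hA : ∀ j, (A j).PosSemidef) (i : Fin n) :
    F (Function.update A i 0) = 0 := by
  have h := F_add hadd hA i Matrix.PosSemidef.zero Matrix.PosSemidef.zero
  simp only [add_zero] at h
  linarith

lemma F_sum (hadd : Addi F) {A : Fin n → Mat n} (hA : ∀ j, (A j).PosSemidef) (i : Fin n)
    {κ : Type*} (s : Finset κ) (B : κ → Mat n) (hB : ∀ k, (B k).PosSemidef) :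
    F (Function.update A i (∑ k ∈ s, B k)) = ∑ k ∈ s, F (Function.update A i (B k)) := by
  classical
  induction s using Finset.induction_on with
  | empty => simpa using F_zero hadd hA i
  | insert _ _ hk ih =>
    rw [Finset.sum_insert hk, Finset.sum_insert hk,
      F_add hadd hA i (hB _) (psd_sum _ _ hB), ih]

lemma F_mono (hnn : Nonneg F) (hadd : Addi F) {A : Fin n → Mat n}
    (hA : ∀ j, (A j).PosSemidef) (i : Fin n) {B C : Mat n} (hB : B.PosSemidef)
    (hC : (C - B).PosSemidef) :
    F (Function.update A i B) ≤ F (Function.update A i C) := by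
  have h2 : B + (C - B) = C := by abel
  have h := F_add hadd hA i hB hC
  rw [h2] at h
  have h3 := hnn _ (psd_update hA hC i)
  linarith

lemma F_smul (hnn : Nonneg F) (hadd : Addi F) {A : Fin n → Mat n}
    (hA : ∀ j, (A j).PosSemidef) (i : Fin n) {B : Mat n} (hB : B.PosSemidef)
    {s : ℝ} (hs : 0 ≤ s) :
    F (Function.update A i (s • B)) = s * F (Function.update A i B) := by
  -- natural number case
  have hnat : ∀ (k : ℕ) (C : Mat n), C.PosSemidef →
      F (Function.update A i ((k : ℝ) • C)) = (k : ℝ) * F (Function.update A i C) := by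
    intro k C hC
    induction k with
    | zero => simpa using F_zero hadd hA i
    | succ k ih =>
      have : ((k+1 : ℕ) : ℝ) • C = (k : ℝ) • C + C := by
        push_cast; rw [add_smul, one_smul]
      rw [this, F_add hadd hA i (psd_smul hC (by positivity)) hC, ih]
      push_cast; ring
  -- rational case
  have hrat : ∀ (p q : ℕ), 0 < q → F (Function.update A i (((p : ℝ)/q) • B))
      = ((p : ℝ)/q) * F (Function.update A i B) := by
    intro p q hq
    have hq' : (q : ℝ) ≠ 0 := by positivity
    have hC : (((1 : ℝ)/q) • B).PosSemidef := psd_smul hB (by positivity)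
    have h1 := hnat q _ hC
    have h2 : (q : ℝ) • ((1:ℝ)/q) • B = B := by
      rw [smul_smul]; field_simp; exact one_smul _ _
    rw [h2] at h1
    have h3 := hnat p _ hC
    have h4 : (p : ℝ) • ((1:ℝ)/q) • B = ((p:ℝ)/q) • B := by
      rw [smul_smul]; congr 1; field_simp
    rw [h4] at h3
    rw [h3]
    have h5 : F (Function.update A i (((1:ℝ)/q) • B)) = (1/(q:ℝ)) * F (Function.update A i B) := by
      rw [h1]
      field_simp
    rw [h5]; ring
  -- squeeze
  have hFB := hnn _ (psd_update hA hB i)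
  set X := F (Function.update A i (s • B)) with hX
  set FB := F (Function.update A i B) with hFBdef
  have key : ∀ m : ℕ, 0 < m → |X - s * FB| ≤ FB / m := by
    intro m hm
    have hm' : (0:ℝ) < m := by exact_mod_cast hm
    set p : ℕ := ⌊(m : ℝ) * s⌋₊ with hp
    have hps : ((p:ℝ)/m) ≤ s := by
      rw [div_le_iff₀ hm']
      calc ((p:ℝ)) ≤ (m:ℝ) * s := Nat.floor_le (by positivity)
      _ = s * m := by ring
    have hsp : s ≤ ((p:ℝ)+1)/m := by
      rw [le_div_iff₀ hm']
      have := Nat.lt_floor_add_one ((m : ℝ) * s)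
      push_cast at this ⊢
      linarith
    have hlo : ((p:ℝ)/m) * FB ≤ X := by
      rw [← hrat p m hm]
      apply F_mono hnn hadd hA i (psd_smul hB (by positivity))
      have : s • B - ((p:ℝ)/m) • B = (s - (p:ℝ)/m) • B := by rw [sub_smul]
      rw [this]
      exact psd_smul hB (by linarith)
    have hhi : X ≤ (((p:ℝ)+1)/m) * FB := by
      have h1 : ((p:ℝ)+1)/m = ((p+1 : ℕ):ℝ)/m := by push_cast; ring
      rw [h1, ← hrat (p+1) m hm]
      apply F_mono hnn hadd hA i (psd_smul hB hs)
      have : ((((p:ℕ)+1:ℕ):ℝ)/m) • B - s • B = (((p:ℝ)+1)/m - s) • B := by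
        rw [sub_smul]; push_cast; ring_nf
      rw [this]
      exact psd_smul hB (by linarith)
    have hsfb1 : ((p:ℝ)/m) * FB ≤ s * FB := by
      apply mul_le_mul_of_nonneg_right hps hFB
    have hsfb2 : s * FB ≤ (((p:ℝ)+1)/m) * FB := by
      apply mul_le_mul_of_nonneg_right hsp hFB
    rw [abs_le]
    constructor
    · have : (((p:ℝ)+1)/m) * FB - ((p:ℝ)/m) * FB = FB / m := by field_simp; ring
      nlinarith
    · have : (((p:ℝ)+1)/m) * FB - ((p:ℝ)/m) * FB = FB / m := by field_simp; ring
      nlinarith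
  by_contra hne
  have hd : 0 < |X - s * FB| := by
    rcases lt_or_gt_of_ne (sub_ne_zero.mpr hne) with h | h
    · rw [abs_of_neg h]; linarith
    · rw [abs_of_pos h]; linarith
  obtain ⟨m, hm⟩ := exists_nat_gt (FB / |X - s * FB|)
  have hm0 : 0 < m := by
    by_contra hm0
    push_neg at hm0
    interval_cases m
    · simp at hm
      have : 0 ≤ FB / |X - s * FB| := div_nonneg hFB (le_of_lt hd)
      linarith
  have hmr : (0:ℝ) < m := by exact_mod_cast hm0
  have := key m hm0
  have h2 : FB / m < |X - s * FB| := by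
    rw [div_lt_iff₀ hmr]
    rw [div_lt_iff₀ hd] at hm
    linarith
  linarith

end F



section RankOne

variable {n : ℕ}

/-- the tuple of rank one matrices built from vectors -/
def RR (V : Fin n → (Fin n → ℝ)) : Fin n → Mat n := fun i => Matrix.vecMulVec (V i) (V i)

/-- the matrix whose i-th column is V i -/
def mV (V : Fin n → (Fin n → ℝ)) : Mat n := Matrix.of fun a i => V i a

lemma psd_RR (V : Fin n → (Fin n → ℝ)) : ∀ j, ((RR V) j).PosSemidef := fun j => psd_r1 (V j)

lemma RR_update (V : Fin n → (Fin n → ℝ)) (i : Fin n) (v : Fin n → ℝ) :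
    RR (Function.update V i v) = Function.update (RR V) i (Matrix.vecMulVec v v) := by
  funext j
  rcases eq_or_ne j i with rfl | h
  · simp [RR]
  · simp [RR, Function.update_of_ne h]

lemma mV_update (V : Fin n → (Fin n → ℝ)) (i : Fin n) (v : Fin n → ℝ) :
    mV (Function.update V i v) = (mV V).updateCol i v := by
  ext a b
  rcases eq_or_ne b i with rfl | h
  · simp [mV, Matrix.updateCol_apply]
  · simp [mV, Matrix.updateCol_apply, h, Function.update_of_ne h]

end RankOne

section MD

variable {n : ℕ}

/-- the σ-matrix of an updated family is an updated column -/
lemma sigmaMat_update (A : Fin n → Mat n) (i : Fin n) (X : Mat n) (σ : Equiv.Perm (Fin n)) :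
    (Matrix.of fun a b => (Function.update A i X) (σ b) a b) =
      (Matrix.of fun a b => A (σ b) a b).updateCol (σ⁻¹ i) (fun a => X a (σ⁻¹ i)) := by
  ext a b
  rcases eq_or_ne b (σ⁻¹ i) with rfl | h
  · simp [Matrix.updateCol_apply]
  · have h2 : σ b ≠ i := by
      intro hc
      apply h
      rw [← hc]; simp
    simp [Matrix.updateCol_apply, h, Function.update_of_ne h2]; exact fun hb => absurd hb h

lemma mD_add (A : Fin n → Mat n) (i : Fin n) (B C : Mat n) :
    mixedDisc n (Function.update A i (B + C)) =
      mixedDisc n (Function.update A i B) + mixedDisc n (Function.update A i C) := by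
  unfold mixedDisc
  rw [← mul_add, ← Finset.sum_add_distrib]
  congr 1
  apply Finset.sum_congr rfl
  intro σ _
  rw [sigmaMat_update, sigmaMat_update, sigmaMat_update]
  have : (fun a => (B + C) a (σ⁻¹ i)) = (fun a => B a (σ⁻¹ i)) + (fun a => C a (σ⁻¹ i)) := by
    funext a; simp
  rw [this, Matrix.det_updateCol_add]

lemma mD_zero (A : Fin n → Mat n) (i : Fin n) :
    mixedDisc n (Function.update A i 0) = 0 := by
  unfold mixedDisc
  rw [mul_eq_zero]
  right
  apply Finset.sum_eq_zero
  intro σ _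
  rw [sigmaMat_update]
  apply Matrix.det_eq_zero_of_column_eq_zero (σ⁻¹ i)
  intro a
  simp [Matrix.updateCol_apply]

lemma mD_sum (A : Fin n → Mat n) (i : Fin n) {κ : Type*} (s : Finset κ) (B : κ → Mat n) :
    mixedDisc n (Function.update A i (∑ k ∈ s, B k)) =
      ∑ k ∈ s, mixedDisc n (Function.update A i (B k)) := by
  classical
  induction s using Finset.induction_on with
  | empty => simpa using mD_zero A i
  | insert _ _ hk ih =>
    rw [Finset.sum_insert hk, Finset.sum_insert hk, mD_add, ih]

/-- the mixed discriminant of a rank one tuple -/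
lemma mD_RR (V : Fin n → (Fin n → ℝ)) :
    mixedDisc n (RR V) = ((n.factorial : ℝ))⁻¹ * ((mV V).det) ^ 2 := by
  unfold mixedDisc
  congr 1
  have key : ∀ σ : Equiv.Perm (Fin n),
      (Matrix.of fun a b => (RR V) (σ b) a b).det
        = (mV V).det * ((Equiv.Perm.sign σ : ℤ) *
            ∏ b : Fin n, V (σ b) b) := by
    intro σ
    have hM : (Matrix.of fun a b => (RR V) (σ b) a b) =
        mV V * ((Matrix.diagonal (fun b => V (σ b) b)).submatrix (⇑σ⁻¹) id) := by
      ext a b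
      simp only [Matrix.mul_apply, Matrix.of_apply, Matrix.submatrix_apply, id,
        Matrix.diagonal_apply, mV]
      rw [Finset.sum_eq_single (σ b)]
      · simp [RR, Matrix.vecMulVec, mul_comm]
      · intro k _ hkn
        have : ¬ (σ⁻¹ k = b) := by
          intro hc; apply hkn; rw [← hc]; simp
        simp [this]; exact fun h => absurd h this
      · simp
    rw [hM, Matrix.det_mul]
    congr 1
    rw [Matrix.det_permute]
    simp [Matrix.det_diagonal]
  rw [Finset.sum_congr rfl (fun σ _ => key σ)]
  rw [← Finset.mul_sum]
  have hdet2 : ∑ σ : Equiv.Perm (Fin n), ((Equiv.Perm.sign σ : ℤ) : ℝ) * ∏ b : Fin n, V (σ b) b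
      = (mV V).det := by
    rw [← Matrix.det_transpose (mV V), Matrix.det_apply']
    apply Finset.sum_congr rfl
    intro σ _
    congr 1
  rw [hdet2]; ring

end MD

section Geometry

variable {n : ℕ} {F : (Fin n → Mat n) → ℝ}

def fV (F : (Fin n → Mat n) → ℝ) (V : Fin n → (Fin n → ℝ)) : ℝ := F (RR V)

lemma jensen_const (φ : ℝ → ℝ) (hpar : ∀ t s, φ (t + s) + φ (t - s) = 2 * φ t)
    (hpos : ∀ t, 0 ≤ φ t) (t : ℝ) : φ t = φ 0 := by
  set A : ℝ → ℝ := fun u => φ u - φ 0 with hA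
  have hzero : A 0 = 0 := by simp [A]
  have haddA : ∀ x y, A (x + y) = A x + A y := by
    intro x y
    have h1 := hpar ((x+y)/2) ((x-y)/2)
    have h2 := hpar ((x+y)/2) ((x+y)/2)
    have e1 : (x+y)/2 + (x-y)/2 = x := by ring
    have e2 : (x+y)/2 - (x-y)/2 = y := by ring
    have e3 : (x+y)/2 + (x+y)/2 = x + y := by ring
    have e4 : (x+y)/2 - (x+y)/2 = 0 := by ring
    rw [e1, e2] at h1
    rw [e3, e4] at h2
    simp only [A]
    linarith
  have hnsmul : ∀ (k : ℕ) (x : ℝ), A ((k : ℝ) * x) = k * A x := by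
    intro k x
    induction k with
    | zero => simpa using hzero
    | succ k ih =>
      have : ((k+1 : ℕ) : ℝ) * x = (k : ℝ) * x + x := by push_cast; ring
      rw [this, haddA, ih]
      push_cast; ring
  have hge : ∀ x, -φ 0 ≤ A x := fun x => by simp only [A]; linarith [hpos x]
  have hA0 : ∀ x, 0 ≤ A x := by
    intro x
    by_contra h
    push_neg at h
    have hAx : 0 < -A x := by linarith
    obtain ⟨k, hk⟩ := exists_nat_gt (φ 0 / (-A x))
    have h1 := hge ((k:ℝ) * x)
    rw [hnsmul] at h1
    rw [div_lt_iff₀ hAx] at hk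
    nlinarith
  have hneg : ∀ x, A x ≤ 0 := by
    intro x
    have h1 := hA0 (-x)
    have h2 := haddA x (-x)
    rw [add_neg_cancel, hzero] at h2
    linarith
  have : A t = 0 := le_antisymm (hneg t) (hA0 t)
  simp only [A] at this
  linarith

lemma f_par (hadd : Addi F) (V : Fin n → Fin n → ℝ) (i : Fin n) (x y : Fin n → ℝ) :
    fV F (Function.update V i (x+y)) + fV F (Function.update V i (x-y)) =
      2 * fV F (Function.update V i x) + 2 * fV F (Function.update V i y) := by
  unfold fV
  rw [RR_update, RR_update, RR_update, RR_update]
  have hps := psd_RR V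
  have h1 : Matrix.vecMulVec (x+y) (x+y) + Matrix.vecMulVec (x-y) (x-y)
      = (Matrix.vecMulVec x x + Matrix.vecMulVec x x)
        + (Matrix.vecMulVec y y + Matrix.vecMulVec y y) := by
    ext a b
    simp [Matrix.vecMulVec]
    ring
  have e1 := F_add hadd hps i (psd_r1 (x+y)) (psd_r1 (x-y))
  have e2 := F_add hadd hps i ((psd_r1 x).add (psd_r1 x)) ((psd_r1 y).add (psd_r1 y))
  have e3 := F_add hadd hps i (psd_r1 x) (psd_r1 x)
  have e4 := F_add hadd hps i (psd_r1 y) (psd_r1 y)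
  rw [h1] at e1
  linarith

lemma f_transvec (hnn : Nonneg F) (hadd : Addi F)
    (hdep : ∀ W : Fin n → (Fin n → ℝ), (mV W).det = 0 → fV F W = 0)
    (V : Fin n → (Fin n → ℝ)) {i j : Fin n} (hij : i ≠ j) (t : ℝ) :
    fV F (Function.update V j (V j + t • V i)) = fV F V := by
  set φ : ℝ → ℝ := fun u => fV F (Function.update V j (V j + u • V i)) with hphi
  have hpar : ∀ u s, φ (u + s) + φ (u - s) = 2 * φ u := by
    intro u s
    have h := f_par hadd V j (V j + u • V i) (s • V i)
    have e1 : V j + u • V i + s • V i = V j + (u+s) • V i := by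
      funext a; simp [add_smul]; ring
    have e2 : V j + u • V i - s • V i = V j + (u-s) • V i := by
      funext a; simp [sub_smul]; ring
    have hz : fV F (Function.update V j (s • V i)) = 0 := by
      apply hdep
      rw [mV_update, Matrix.det_updateCol_smul]
      have hVi : (V i) = (fun k => (mV V) k i) := rfl
      rw [hVi, Matrix.det_updateCol_eq_zero hij, mul_zero]
    rw [e1, e2] at h
    rw [hz] at h
    simp only [φ]
    linarith
  have hpos : ∀ u, 0 ≤ φ u := fun u => hnn _ (psd_RR _)
  have h := jensen_const φ hpar hpos t
  simp only [φ] at h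
  rw [h]
  congr 1
  rw [zero_smul, add_zero, Function.update_eq_self]

lemma vecMulVec_smul (d : ℝ) (v : Fin n → ℝ) :
    Matrix.vecMulVec (d • v) (d • v) = (d^2) • Matrix.vecMulVec v v := by
  ext a b
  simp [Matrix.vecMulVec]
  ring

lemma f_scale (hnn : Nonneg F) (hadd : Addi F) (V : Fin n → (Fin n → ℝ)) (i : Fin n) (d : ℝ) :
    fV F (Function.update V i (d • V i)) = d^2 * fV F V := by
  unfold fV
  rw [RR_update, vecMulVec_smul]
  rw [F_smul hnn hadd (psd_RR V) i (psd_r1 (V i)) (sq_nonneg d)]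
  congr 1
  have : Matrix.vecMulVec (V i) (V i) = RR V i := rfl
  rw [this, Function.update_eq_self]

lemma f_scale_all (hnn : Nonneg F) (hadd : Addi F) (V : Fin n → (Fin n → ℝ)) (d : Fin n → ℝ) :
    fV F (fun k => d k • V k) = (∏ k, (d k)^2) * fV F V := by
  classical
  have key : ∀ t : Finset (Fin n),
      fV F (fun k => if k ∈ t then d k • V k else V k) = (∏ k ∈ t, (d k)^2) * fV F V := by
    intro t
    induction t using Finset.induction_on with
    | empty => simp
    | insert a t ha ih =>
      have hupdate : (fun k => if k ∈ insert a t then d k • V k else V k) =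
          Function.update (fun k => if k ∈ t then d k • V k else V k) a
            (d a • (fun k => if k ∈ t then d k • V k else V k) a) := by
        funext k
        rcases eq_or_ne k a with rfl | hk
        · simp [ha]
        · simp [Function.update_of_ne hk, Finset.mem_insert, hk]
      rw [hupdate, f_scale hnn hadd _ a (d a), ih, Finset.prod_insert ha]
      ring
  have h := key Finset.univ
  simpa using h

def gg (F : (Fin n → Mat n) → ℝ) (M : Mat n) : ℝ := fV F (fun i a => M a i)

lemma g_mul (hnn : Nonneg F) (hadd : Addi F)
    (hdep : ∀ W : Fin n → (Fin n → ℝ), (mV W).det = 0 → fV F W = 0)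
    (M : Mat n) : ∀ N : Mat n, gg F (N * M) = (M.det)^2 * gg F N := by
  apply Matrix.diagonal_transvection_induction
    (fun M => ∀ N : Mat n, gg F (N*M) = M.det^2 * gg F N) M
  · intro D _ N
    have hcols : (fun i a => (N * Matrix.diagonal D) a i)
        = (fun i => D i • (fun a => N a i)) := by
      funext i a
      simp [Matrix.mul_diagonal, mul_comm]
    unfold gg
    rw [hcols, f_scale_all hnn hadd]
    rw [Matrix.det_diagonal, ← Finset.prod_pow]
  · intro t N
    have hcols : (fun i a => (N * t.toMatrix) a i)
        = Function.update (fun i a => N a i) t.j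
            ((fun a => N a t.j) + t.c • (fun a => N a t.i)) := by
      funext k a
      have hexp : N * t.toMatrix = N + N * Matrix.single t.i t.j t.c := by
        rw [Matrix.TransvectionStruct.toMatrix, Matrix.transvection, Matrix.mul_add,
          Matrix.mul_one]
      rcases eq_or_ne k t.j with rfl | hk
      · simp only [Function.update_self, Pi.add_apply, Pi.smul_apply, smul_eq_mul, hexp,
          Matrix.add_apply, Matrix.mul_single_apply_same t.c t.i t.j a N]
        ring
      · rw [Function.update_of_ne hk]
        rw [hexp, Matrix.add_apply, Matrix.mul_single_apply_of_ne t.c t.i t.j a k hk N,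
          add_zero]
    unfold gg
    rw [hcols]
    have h := f_transvec hnn hadd hdep (fun i a => N a i) t.hij t.c
    rw [Matrix.TransvectionStruct.det]
    simpa using h
  · intro P Q hP hQ N
    rw [← Matrix.mul_assoc, hQ, hP, Matrix.det_mul]
    ring

lemma f_formula (hnn : Nonneg F) (hadd : Addi F)
    (hdep : ∀ W : Fin n → (Fin n → ℝ), (mV W).det = 0 → fV F W = 0)
    (V : Fin n → (Fin n → ℝ)) : fV F V = ((mV V).det)^2 * gg F 1 := by
  have h : gg F (mV V) = fV F V := rfl
  rw [← h]
  have h2 := g_mul hnn hadd hdep (mV V) 1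
  simpa using h2

open scoped MatrixOrder in
noncomputable def _root_.Matrix.PosSemidef.sqrt {A : Mat n} (_hA : A.PosSemidef) : Mat n :=
  CFC.sqrt A

open scoped MatrixOrder in
lemma _root_.Matrix.PosSemidef.sqrt_mul_self {A : Mat n} (hA : A.PosSemidef) :
    hA.sqrt * hA.sqrt = A :=
  CFC.sqrt_mul_sqrt_self A hA.nonneg

open scoped MatrixOrder in
lemma _root_.Matrix.PosSemidef.posSemidef_sqrt {A : Mat n} (hA : A.PosSemidef) :
    hA.sqrt.PosSemidef :=
  (CFC.sqrt_nonneg A).posSemidef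

lemma psd_decomp {A : Mat n} (hA : A.PosSemidef) :
    A = ∑ k : Fin n, Matrix.vecMulVec (fun a => hA.sqrt a k) (fun a => hA.sqrt a k) := by
  have hs := hA.sqrt_mul_self
  have hherm : hA.sqrt.IsHermitian := hA.posSemidef_sqrt.1
  ext a b
  have h1 : A a b = ∑ k, hA.sqrt a k * hA.sqrt k b := by
    have := congrFun (congrFun hs a) b
    rw [← this, Matrix.mul_apply]
  have hsym : ∀ k, hA.sqrt k b = hA.sqrt b k := by
    intro k
    have := congrFun (congrFun hherm k) b
    simpa [Matrix.conjTranspose_apply] using this.symm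
  rw [Matrix.sum_apply, h1]
  apply Finset.sum_congr rfl
  intro k _
  rw [hsym k]
  simp [Matrix.vecMulVec]

end Geometry

end MDAux

/-- A nonnegative function of `n` positive semidefinite symmetric matrices which is
additive in each variable and bounded from above by a constant multiple of the mixed
discriminant is itself a constant multiple of the mixed discriminant. -/
theorem mixedDisc_minimality {n : ℕ} (hn : 1 ≤ n)
    (F : (Fin n → Matrix (Fin n) (Fin n) ℝ) → ℝ)
    (hnonneg : ∀ A : Fin n → Matrix (Fin n) (Fin n) ℝ,
      (∀ j, (A j).PosSemidef) → 0 ≤ F A)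
    (hadd : ∀ (A : Fin n → Matrix (Fin n) (Fin n) ℝ) (i : Fin n)
      (B : Matrix (Fin n) (Fin n) ℝ), (∀ j, (A j).PosSemidef) → B.PosSemidef →
      F (Function.update A i (A i + B)) = F A + F (Function.update A i B))
    (c : ℝ) (hc : 0 ≤ c)
    (hbound : ∀ A : Fin n → Matrix (Fin n) (Fin n) ℝ,
      (∀ j, (A j).PosSemidef) → F A ≤ c * mixedDisc n A) :
    ∃ a : ℝ, 0 ≤ a ∧ ∀ A : Fin n → Matrix (Fin n) (Fin n) ℝ,
      (∀ j, (A j).PosSemidef) → F A = a * mixedDisc n A := by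
  classical
  have hnn : MDAux.Nonneg F := hnonneg
  have haddi : MDAux.Addi F := hadd
  have hdep : ∀ W : Fin n → (Fin n → ℝ), (MDAux.mV W).det = 0 → MDAux.fV F W = 0 := by
    intro W hW
    have h1 := hbound (MDAux.RR W) (MDAux.psd_RR W)
    rw [MDAux.mD_RR, hW] at h1
    have h2 := hnonneg (MDAux.RR W) (MDAux.psd_RR W)
    unfold MDAux.fV
    have h3 : F (MDAux.RR W) ≤ 0 := by simpa using h1
    exact le_antisymm h3 h2
  have hg1nn : 0 ≤ MDAux.gg F 1 := by
    unfold MDAux.gg MDAux.fV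
    exact hnonneg _ (MDAux.psd_RR _)
  refine ⟨(n.factorial : ℝ) * MDAux.gg F 1, by positivity, ?_⟩
  have hfac : (n.factorial : ℝ) ≠ 0 := by positivity
  have hr1 : ∀ V : Fin n → (Fin n → ℝ),
      F (MDAux.RR V) = ((n.factorial : ℝ) * MDAux.gg F 1) * mixedDisc n (MDAux.RR V) := by
    intro V
    have h1 := MDAux.f_formula hnn haddi hdep V
    unfold MDAux.fV at h1
    rw [MDAux.mD_RR, h1]
    field_simp
  have key : ∀ m : ℕ, ∀ A : Fin n → Matrix (Fin n) (Fin n) ℝ, (∀ j, (A j).PosSemidef) →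
      (∀ j : Fin n, m ≤ (j : ℕ) → ∃ v, A j = Matrix.vecMulVec v v) →
      F A = ((n.factorial : ℝ) * MDAux.gg F 1) * mixedDisc n A := by
    intro m
    induction m with
    | zero =>
      intro A hA h0
      have hex : ∀ j, ∃ v, A j = Matrix.vecMulVec v v := fun j => h0 j (Nat.zero_le _)
      choose V hV using hex
      have hAV : A = MDAux.RR V := funext hV
      rw [hAV]
      exact hr1 V
    | succ m ih =>
      intro A hA hcond
      by_cases hm : m < n
      · set i : Fin n := ⟨m, hm⟩ with hi
        set S := (hA i).sqrt with hS
        set B : Fin n → Matrix (Fin n) (Fin n) ℝ :=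
          fun k => Matrix.vecMulVec (fun a => S a k) (fun a => S a k) with hB
        have hBpsd : ∀ k, (B k).PosSemidef := fun k => MDAux.psd_r1 _
        have hAi : A i = ∑ k : Fin n, B k := MDAux.psd_decomp (hA i)
        have e0 : A = Function.update A i (∑ k : Fin n, B k) := by
          rw [← hAi, Function.update_eq_self]
        rw [e0, MDAux.F_sum haddi hA i Finset.univ B hBpsd,
          MDAux.mD_sum A i Finset.univ B, Finset.mul_sum]
        apply Finset.sum_congr rfl
        intro k _
        apply ih _ (MDAux.psd_update hA (hBpsd k) i)
        intro j hj
        rcases eq_or_ne j i with rfl | hne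
        · exact ⟨_, by rw [Function.update_self]⟩
        · rw [Function.update_of_ne hne]
          apply hcond j
          have hjm : (j : ℕ) ≠ m := by
            intro hc
            apply hne
            apply Fin.ext
            rw [hc, hi]
          omega
      · push_neg at hm
        apply ih A hA
        intro j hj
        exfalso
        have := j.2
        omega
  intro A hA
  apply key n A hA
  intro j hj
  exfalso
  have := j.2
  omega
end

section
/- For A₁,…,Aₙ ∈ ℳⁿ, one has D(A₁,…,Aₙ) > 0 if and only if there exist linearly independent vectors v₁,…,vₙ ∈ ℝⁿ with v_i ∈ P(A_i) for i = 1,…,n. -/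
open Matrix

private lemma det_expand {n : ℕ} (c : Fin n → Fin n → ℝ) (w : Fin n → Fin n → (Fin n → ℝ)) :
    (Matrix.of fun j a => ∑ k, c j k * w j k a).det
      = ∑ f : Fin n → Fin n, (∏ j, c j (f j)) * (Matrix.of fun j a => w j (f j) a).det := by
  have h1 : (Matrix.of fun j a => ∑ k, c j k * w j k a).det
      = (Matrix.detRowAlternating).toMultilinearMap (fun j => ∑ k, c j k • w j k) := by
    congr 1
    funext j a
    simp [Finset.sum_apply]
  rw [h1, MultilinearMap.map_sum]
  refine Finset.sum_congr rfl fun f _ => ?_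
  have h2 : (fun j => c j (f j) • w j (f j)) = fun j => c j (f j) • (fun j' => w j' (f j')) j := rfl
  rw [h2, (Matrix.detRowAlternating).toMultilinearMap.map_smul_univ]
  rfl

private lemma key {n : ℕ} (A B : Fin n → Matrix (Fin n) (Fin n) ℝ) (hB : ∀ i, A i = B i * (B i)ᵀ) :
    (n.factorial : ℝ) * mixedDisc n A
      = ∑ k : Fin n → Fin n, ((Matrix.of fun a i => B i a (k i)).det)^2 := by
  rw [mixedDisc, ← mul_assoc, mul_inv_cancel₀ (by exact_mod_cast n.factorial_ne_zero), one_mul]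
  have step : ∀ σ : Equiv.Perm (Fin n), (Matrix.of fun i j => A (σ j) i j).det
      = ∑ f : Fin n → Fin n, (∏ j, B (σ j) j (f j)) *
          (Matrix.of fun j a => B (σ j) a (f j)).det := by
    intro σ
    rw [← Matrix.det_transpose]
    have ht : (Matrix.of fun i j => A (σ j) i j)ᵀ
        = Matrix.of fun j a => ∑ k, (B (σ j)) j k * (B (σ j)) a k := by
      ext j a
      simp only [Matrix.transpose_apply, Matrix.of_apply, hB, Matrix.mul_apply,
        Matrix.transpose_apply]
      exact Finset.sum_congr rfl fun k _ => mul_comm _ _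
    rw [ht]
    exact det_expand (fun j k => B (σ j) j k) (fun j k a => B (σ j) a k)
  simp only [step]
  -- reindex f = k ∘ σ
  have reidx : ∀ σ : Equiv.Perm (Fin n),
      (∑ f : Fin n → Fin n, (∏ j, B (σ j) j (f j)) * (Matrix.of fun j a => B (σ j) a (f j)).det)
      = ∑ k : Fin n → Fin n, (∏ j, B (σ j) j (k (σ j))) *
          (Matrix.of fun j a => B (σ j) a (k (σ j))).det := by
    intro σ
    exact (Fintype.sum_equiv (Equiv.arrowCongr σ.symm (Equiv.refl (Fin n)))
      _ _ (fun k => by simp [Equiv.arrowCongr])).symm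
  simp only [reidx]
  rw [Finset.sum_comm]
  refine Finset.sum_congr rfl fun k _ => ?_
  set V : Matrix (Fin n) (Fin n) ℝ := Matrix.of fun a i => B i a (k i) with hV
  have hsub : ∀ σ : Equiv.Perm (Fin n),
      (Matrix.of fun j a => B (σ j) a (k (σ j))) = (Vᵀ).submatrix σ id := by
    intro σ; ext j a; simp [hV]
  have hprod : ∀ σ : Equiv.Perm (Fin n),
      (∏ j, B (σ j) j (k (σ j))) = ∏ j, Vᵀ (σ j) j := by
    intro σ; exact Finset.prod_congr rfl fun j _ => rfl
  calc ∑ σ : Equiv.Perm (Fin n), (∏ j, B (σ j) j (k (σ j))) *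
          (Matrix.of fun j a => B (σ j) a (k (σ j))).det
      = ∑ σ : Equiv.Perm (Fin n), (Equiv.Perm.sign σ : ℝ) * (∏ j, Vᵀ (σ j) j) * V.det := by
        refine Finset.sum_congr rfl fun σ _ => ?_
        rw [hsub, hprod, Matrix.det_permute, Matrix.det_transpose]
        ring
    _ = (∑ σ : Equiv.Perm (Fin n), (Equiv.Perm.sign σ : ℝ) * ∏ j, Vᵀ (σ j) j) * V.det := by
        rw [Finset.sum_mul]
    _ = V.det ^ 2 := by
        rw [← Matrix.det_apply', Matrix.det_transpose, sq]

private lemma exists_B {n : ℕ} (A : Matrix (Fin n) (Fin n) ℝ) (hA : A.PosSemidef) :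
    ∃ B : Matrix (Fin n) (Fin n) ℝ, A = B * Bᵀ ∧
      ∀ k, (fun a => B a k) ∈ LinearMap.range (Matrix.toLin' A) := by
  have hH := hA.1
  refine ⟨Matrix.of fun a k => Real.sqrt (hH.eigenvalues k) * hH.eigenvectorBasis k a, ?_, ?_⟩
  · ext a b
    conv_lhs => rw [hH.spectral_theorem, Unitary.conjStarAlgAut_apply]
    rw [Matrix.mul_apply]
    simp only [Matrix.mul_diagonal, Matrix.star_apply, RCLike.star_def, RCLike.conj_to_real,
      Function.comp_apply, Matrix.IsHermitian.eigenvectorUnitary_apply,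
      Matrix.transpose_apply, Matrix.of_apply, RCLike.ofReal_real_eq_id, id_eq]
    refine Finset.sum_congr rfl fun k _ => ?_
    have h2 : Real.sqrt (hH.eigenvalues k) * Real.sqrt (hH.eigenvalues k) = hH.eigenvalues k :=
      Real.mul_self_sqrt (hA.eigenvalues_nonneg k)
    have h3 : Real.sqrt (hH.eigenvalues k) * hH.eigenvectorBasis k a *
        (Real.sqrt (hH.eigenvalues k) * hH.eigenvectorBasis k b)
        = (Real.sqrt (hH.eigenvalues k) * Real.sqrt (hH.eigenvalues k)) *
          (hH.eigenvectorBasis k a * hH.eigenvectorBasis k b) := by ring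
    show _ = Real.sqrt (hH.eigenvalues k) * hH.eigenvectorBasis k a *
        (Real.sqrt (hH.eigenvalues k) * hH.eigenvectorBasis k b)
    rw [h3, h2]
    ring
  · intro k
    by_cases h : hH.eigenvalues k = 0
    · have : (fun a => (Matrix.of fun a k => Real.sqrt (hH.eigenvalues k) * hH.eigenvectorBasis k a) a k) = 0 := by
        funext a; simp [h]
      rw [this]; exact zero_mem _
    · refine ⟨(Real.sqrt (hH.eigenvalues k) / hH.eigenvalues k) • ⇑(hH.eigenvectorBasis k), ?_⟩
      rw [Matrix.toLin'_apply]
      funext a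
      have hv := hH.mulVec_eigenvectorBasis k
      calc (A *ᵥ (Real.sqrt (hH.eigenvalues k) / hH.eigenvalues k) • ⇑(hH.eigenvectorBasis k)) a
          = (Real.sqrt (hH.eigenvalues k) / hH.eigenvalues k) * (A *ᵥ ⇑(hH.eigenvectorBasis k)) a := by
            rw [Matrix.mulVec_smul]; rfl
        _ = (Real.sqrt (hH.eigenvalues k) / hH.eigenvalues k) * (hH.eigenvalues k * hH.eigenvectorBasis k a) := by rw [hv]; rfl
        _ = Real.sqrt (hH.eigenvalues k) * hH.eigenvectorBasis k a := by field_simp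

/-- For positive semidefinite matrices `A₁,…,Aₙ`, the mixed discriminant
`D(A₁,…,Aₙ)` is positive if and only if there are linearly independent vectors
`vᵢ` with `v_i ∈ P(A_i)`, where `P(A)` is the column space of `A`. -/
theorem mixedDisc_pos_iff_linearIndependent {n : ℕ}
    (A : Fin n → Matrix (Fin n) (Fin n) ℝ) (hA : ∀ i, (A i).PosSemidef) :
    0 < mixedDisc n A ↔
      ∃ v : Fin n → (Fin n → ℝ), LinearIndependent ℝ v ∧
        ∀ i, v i ∈ LinearMap.range (Matrix.toLin' (A i)) := by
  choose B hBB hrange using fun i => exists_B (A i) (hA i)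
  have hfac : (0:ℝ) < (n.factorial : ℝ) := by exact_mod_cast n.factorial_pos
  set d : (Fin n → Fin n) → ℝ := fun k => (Matrix.of fun a i => B i a (k i)).det with hd
  have hk : (n.factorial : ℝ) * mixedDisc n A = ∑ k : Fin n → Fin n, d k ^ 2 := key A B hBB
  have hpos : 0 < mixedDisc n A ↔ ∃ k, d k ≠ 0 := by
    constructor
    · intro h
      by_contra hc
      push_neg at hc
      have : (n.factorial : ℝ) * mixedDisc n A = 0 := by
        rw [hk]
        exact Finset.sum_eq_zero fun k _ => by rw [hc k]; ring
      nlinarith [h, hfac, mul_pos hfac h]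
    · rintro ⟨k, hkne⟩
      have hsq : 0 < d k ^ 2 := lt_of_le_of_ne (sq_nonneg _) (Ne.symm (pow_ne_zero 2 hkne))
      have h3 : d k ^ 2 ≤ ∑ x : Fin n → Fin n, d x ^ 2 :=
        Finset.single_le_sum (fun m _ => sq_nonneg (d m)) (Finset.mem_univ k)
      have h2 : 0 < (n.factorial : ℝ) * mixedDisc n A := hk ▸ lt_of_lt_of_le hsq h3
      nlinarith [h2, hfac]
  rw [hpos]
  constructor
  · rintro ⟨k, hkne⟩
    refine ⟨fun i a => B i a (k i), ?_, fun i => hrange i (k i)⟩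
    have : IsUnit (Matrix.of fun a i => B i a (k i)) :=
      (Matrix.isUnit_iff_isUnit_det _).2 (isUnit_iff_ne_zero.2 hkne)
    exact Matrix.linearIndependent_cols_iff_isUnit.2 this
  · rintro ⟨v, hli, hmem⟩
    choose x hx using fun i => hmem i
    set w : Fin n → Fin n → ℝ := fun i => (B i)ᵀ *ᵥ x i with hw
    have hvW : ∀ i, v i = fun a => ∑ m, w i m * B i a m := by
      intro i
      have : v i = B i *ᵥ w i := by
        rw [hw, Matrix.mulVec_mulVec, ← hBB i, ← Matrix.toLin'_apply, hx i]
      rw [this]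
      funext a
      rw [Matrix.mulVec]
      simp [dotProduct, mul_comm]
    have hdetW : (Matrix.of fun i a => v i a).det ≠ 0 := by
      have hu : LinearIndependent ℝ (fun i => (Matrix.of fun i a => v i a) i) := hli
      have := Matrix.linearIndependent_rows_iff_isUnit.1 hu
      exact ((Matrix.isUnit_iff_isUnit_det _).1 this).ne_zero
    have hWexp : (Matrix.of fun i a => v i a).det
        = ∑ f : Fin n → Fin n, (∏ i, w i (f i)) * (Matrix.of fun i a => B i a (f i)).det := by
      have : (Matrix.of fun i a => v i a) = Matrix.of fun i a => ∑ m, w i m * B i a m := by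
        ext i a
        simp only [Matrix.of_apply]
        rw [hvW i]
      rw [this]
      exact det_expand w (fun i m a => B i a m)
    by_contra hc
    push_neg at hc
    apply hdetW
    rw [hWexp]
    refine Finset.sum_eq_zero fun f _ => ?_
    have : (Matrix.of fun i a => B i a (f i)).det = 0 := by
      have ht : (Matrix.of fun i a => B i a (f i)) = (Matrix.of fun a i => B i a (f i))ᵀ := by
        ext i a; rfl
      rw [ht, Matrix.det_transpose]
      exact hc f
    rw [this]; ring
end

section
/- Let n ≥ 2 and let F : (ℳⁿ)ⁿ → ℝ be a nonnegative function which is additive in each variable and which satisfies F(A₁,…,Aₙ) = 0 whenever two of its arguments are proportional matrices of rank one. Let s, t₁, t₂ ∈ ℝⁿ be nonzero vectors such that t₂ = ε·t₁ + λ·s for some ε ∈ {1,−1} and some λ ∈ ℝ. Then for all A₃,…,Aₙ ∈ ℳⁿ, F(t₁t₁ᵀ, s sᵀ, A₃,…,Aₙ) = F(t₂t₂ᵀ, s sᵀ, A₃,…,Aₙ). -/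
open Matrix

lemma myVecMulVec_mulVec {n : ℕ} (w v x : Fin n → ℝ) :
    Matrix.vecMulVec w v *ᵥ x = (v ⬝ᵥ x) • w := by
  ext j
  simp [Matrix.mulVec, Matrix.vecMulVec_apply, dotProduct, Finset.sum_mul,
    Finset.mul_sum, mul_comm, mul_assoc, mul_left_comm]

lemma myVecMulVec_posSemidef {n : ℕ} (v : Fin n → ℝ) :
    (Matrix.vecMulVec v v).PosSemidef := by
  simpa using Matrix.posSemidef_vecMulVec_self_star v

lemma myRank_vecMulVec {n : ℕ} {v : Fin n → ℝ} (hv : v ≠ 0) :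
    (Matrix.vecMulVec v v).rank = 1 := by
  have hrange : LinearMap.range (Matrix.vecMulVec v v).mulVecLin = Submodule.span ℝ {v} := by
    apply le_antisymm
    · rintro _ ⟨x, rfl⟩
      rw [Matrix.mulVecLin_apply, myVecMulVec_mulVec]
      exact Submodule.smul_mem _ _ (Submodule.mem_span_singleton_self v)
    · rw [Submodule.span_le, Set.singleton_subset_iff]
      refine ⟨(v ⬝ᵥ v)⁻¹ • v, ?_⟩
      have hvv : v ⬝ᵥ v ≠ 0 := by
        simpa [dotProduct_self_eq_zero] using hv
      rw [Matrix.mulVecLin_apply, myVecMulVec_mulVec, dotProduct_smul]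
      rw [smul_eq_mul, inv_mul_cancel₀ hvv, one_smul]
  rw [Matrix.rank, hrange, finrank_span_singleton hv]

/-- Lemma 4 of Florentin–Milman–Schneider: if `F` is nonnegative, additive in each
variable and vanishes when two arguments are proportional rank-one matrices, and if
the centered segments `[-t₁,t₁]`, `[-t₂,t₂]`, `[-s,s]` satisfy
`T₁ + ℝS = T₂ + ℝS` (i.e. `t₂ = ±t₁ + λs`), then `F` takes the same value on
`(t₁t₁ᵀ, ssᵀ, A₃, …, Aₙ)` and `(t₂t₂ᵀ, ssᵀ, A₃, …, Aₙ)`. -/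
theorem F_eq_of_segments_span {n : ℕ} (hn : 2 ≤ n)
    (F : (Fin n → Matrix (Fin n) (Fin n) ℝ) → ℝ)
    (hnonneg : ∀ A : Fin n → Matrix (Fin n) (Fin n) ℝ,
      (∀ j, (A j).PosSemidef) → 0 ≤ F A)
    (hadd : ∀ (A : Fin n → Matrix (Fin n) (Fin n) ℝ) (i : Fin n)
      (B : Matrix (Fin n) (Fin n) ℝ), (∀ j, (A j).PosSemidef) → B.PosSemidef →
      F (Function.update A i (A i + B)) = F A + F (Function.update A i B))
    (hvanish : ∀ A : Fin n → Matrix (Fin n) (Fin n) ℝ,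
      (∀ j, (A j).PosSemidef) →
      (∃ i j, i ≠ j ∧ (A i).rank = 1 ∧ (A j).rank = 1 ∧
        ∃ c : ℝ, 0 < c ∧ A i = c • A j) →
      F A = 0)
    (s t₁ t₂ : Fin n → ℝ) (hs : s ≠ 0) (ht₁ : t₁ ≠ 0) (ht₂ : t₂ ≠ 0)
    (ε lam : ℝ) (hε : ε = 1 ∨ ε = -1) (ht : t₂ = ε • t₁ + lam • s) :
    ∀ A : Fin n → Matrix (Fin n) (Fin n) ℝ, (∀ j, (A j).PosSemidef) →
      F (Function.update (Function.update A ⟨0, by omega⟩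
            (Matrix.vecMulVec t₁ t₁)) ⟨1, by omega⟩ (Matrix.vecMulVec s s)) =
      F (Function.update (Function.update A ⟨0, by omega⟩
            (Matrix.vecMulVec t₂ t₂)) ⟨1, by omega⟩ (Matrix.vecMulVec s s)) := by
  intro A hA
  set i0 : Fin n := ⟨0, by omega⟩ with hi0
  set i1 : Fin n := ⟨1, by omega⟩ with hi1
  have hne : i0 ≠ i1 := by
    simp only [hi0, hi1, ne_eq, Fin.mk.injEq]
    omega
  set S : Matrix (Fin n) (Fin n) ℝ := Matrix.vecMulVec s s with hSdef
  set C : Matrix (Fin n) (Fin n) ℝ → Fin n → Matrix (Fin n) (Fin n) ℝ :=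
    fun T => Function.update (Function.update A i0 T) i1 S with hCdef
  have hC0 : ∀ T, C T i0 = T := by
    intro T
    simp only [hCdef]
    rw [Function.update_of_ne hne, Function.update_self]
  have hC1 : ∀ T, C T i1 = S := by
    intro T
    simp only [hCdef]
    rw [Function.update_self]
  have hCup : ∀ T X, Function.update (C T) i0 X = C X := by
    intro T X
    simp only [hCdef]
    rw [Function.update_comm hne.symm, Function.update_idem]
  have hCpsd : ∀ T : Matrix (Fin n) (Fin n) ℝ, T.PosSemidef →
      ∀ j, (C T j).PosSemidef := by
    intro T hT j
    rcases eq_or_ne j i1 with rfl | h1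
    · rw [hC1, hSdef]; exact myVecMulVec_posSemidef s
    rcases eq_or_ne j i0 with rfl | h0
    · rw [hC0]; exact hT
    · simp only [hCdef]
      rw [Function.update_of_ne h1, Function.update_of_ne h0]
      exact hA j
  set G : Matrix (Fin n) (Fin n) ℝ → ℝ := fun T => F (C T) with hGdef
  have hGadd : ∀ T B : Matrix (Fin n) (Fin n) ℝ, T.PosSemidef → B.PosSemidef →
      G (T + B) = G T + G B := by
    intro T B hT hB
    have h := hadd (C T) i0 B (hCpsd T hT) hB
    rw [hC0, hCup, hCup] at h
    simpa only [hGdef] using h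
  have hG0 : G 0 = 0 := by
    have h := hGadd 0 0 Matrix.PosSemidef.zero Matrix.PosSemidef.zero
    rw [add_zero] at h
    linarith
  have hGnonneg : ∀ T : Matrix (Fin n) (Fin n) ℝ, T.PosSemidef → 0 ≤ G T := by
    intro T hT
    simpa only [hGdef] using hnonneg (C T) (hCpsd T hT)
  have hGs : ∀ y : ℝ, G (Matrix.vecMulVec (y • s) (y • s)) = 0 := by
    intro y
    rcases eq_or_ne y 0 with rfl | hy
    · have h0 : Matrix.vecMulVec ((0:ℝ) • s) ((0:ℝ) • s) = (0 : Matrix (Fin n) (Fin n) ℝ) := by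
        ext i j
        simp [Matrix.vecMulVec_apply]
      rw [h0]
      exact hG0
    · simp only [hGdef]
      refine hvanish _ (hCpsd _ (myVecMulVec_posSemidef _))
        ⟨i0, i1, hne, ?_, ?_, y * y, mul_self_pos.mpr hy, ?_⟩
      · rw [hC0]; exact myRank_vecMulVec (smul_ne_zero hy hs)
      · rw [hC1, hSdef]; exact myRank_vecMulVec hs
      · rw [hC0, hC1, hSdef]
        ext i j
        simp [Matrix.vecMulVec_apply]
        ring
  -- the auxiliary one-variable function
  set u : Fin n → ℝ := ε • t₁ with hudef
  have huu : Matrix.vecMulVec u u = Matrix.vecMulVec t₁ t₁ := by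
    ext i j
    rcases hε with rfl | rfl <;> simp [hudef, Matrix.vecMulVec_apply] <;> ring
  set g : ℝ → ℝ := fun x => G (Matrix.vecMulVec (u + x • s) (u + x • s)) with hgdef
  have hgnn : ∀ x, 0 ≤ g x := by
    intro x
    simp only [hgdef]
    exact hGnonneg _ (myVecMulVec_posSemidef _)
  have hkey : ∀ x y : ℝ, g (x + y) + g (x - y) = 2 * g x := by
    intro x y
    set a : Fin n → ℝ := u + x • s with ha
    have h1 : u + (x + y) • s = a + y • s := by
      rw [ha, add_smul, ← add_assoc]
    have h2 : u + (x - y) • s = a - y • s := by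
      rw [ha, sub_smul]
      exact (add_sub_assoc _ _ _).symm
    have gxy : g (x + y) = G (Matrix.vecMulVec (a + y • s) (a + y • s)) := by
      simp only [hgdef]; rw [h1]
    have gxm : g (x - y) = G (Matrix.vecMulVec (a - y • s) (a - y • s)) := by
      simp only [hgdef]; rw [h2]
    have gx : g x = G (Matrix.vecMulVec a a) := by
      simp only [hgdef]; rfl
    have hmat : Matrix.vecMulVec (a + y • s) (a + y • s)
          + Matrix.vecMulVec (a - y • s) (a - y • s)
        = (Matrix.vecMulVec a a + Matrix.vecMulVec a a)
          + (Matrix.vecMulVec (y • s) (y • s) + Matrix.vecMulVec (y • s) (y • s)) := by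
      ext i j
      simp [Matrix.vecMulVec_apply, Matrix.add_apply]
      ring
    have psdA := myVecMulVec_posSemidef a
    have psdY := myVecMulVec_posSemidef (y • s)
    have e1 : G (Matrix.vecMulVec (a + y • s) (a + y • s)
          + Matrix.vecMulVec (a - y • s) (a - y • s))
        = g (x + y) + g (x - y) := by
      rw [hGadd _ _ (myVecMulVec_posSemidef _) (myVecMulVec_posSemidef _), gxy, gxm]
    have e2 : G ((Matrix.vecMulVec a a + Matrix.vecMulVec a a)
          + (Matrix.vecMulVec (y • s) (y • s) + Matrix.vecMulVec (y • s) (y • s)))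
        = 2 * g x := by
      rw [hGadd _ _ (psdA.add psdA) (psdY.add psdY), hGadd _ _ psdA psdA,
        hGadd _ _ psdY psdY, hGs y, gx]
      ring
    rw [← e1, hmat, e2]
  have hval : ∀ k : ℕ, g ((k : ℝ) * lam) = g 0 + (k : ℝ) * (g lam - g 0) ∧
      g (((k : ℝ) + 1) * lam) = g 0 + ((k : ℝ) + 1) * (g lam - g 0) := by
    intro k
    induction k with
    | zero =>
      constructor
      · norm_num
      · norm_num
    | succ k ih =>
      obtain ⟨h1, h2⟩ := ih
      constructor
      · push_cast
        exact h2
      · have h := hkey (((k : ℝ) + 1) * lam) lam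
        have e1 : ((k : ℝ) + 1) * lam + lam = (((k : ℝ) + 1) + 1) * lam := by ring
        have e2 : ((k : ℝ) + 1) * lam - lam = (k : ℝ) * lam := by ring
        rw [e1, e2] at h
        push_cast
        linarith
  have hneg : ∀ k : ℕ, g (-((k : ℝ) * lam)) = 2 * g 0 - g ((k : ℝ) * lam) := by
    intro k
    have h := hkey 0 ((k : ℝ) * lam)
    rw [zero_add, zero_sub] at h
    linarith
  have hδ : g lam = g 0 := by
    by_contra hne'
    rcases (sub_ne_zero.mpr hne' : g lam - g 0 ≠ 0).lt_or_gt with hlt | hgt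
    · obtain ⟨k, hk⟩ := exists_nat_gt (g 0 / (-(g lam - g 0)))
      have hpos : (0:ℝ) < -(g lam - g 0) := by linarith
      have hk' : g 0 < (k : ℝ) * (-(g lam - g 0)) := (div_lt_iff₀ hpos).mp hk
      have hnn := hgnn ((k : ℝ) * lam)
      rw [(hval k).1] at hnn
      nlinarith
    · obtain ⟨k, hk⟩ := exists_nat_gt (g 0 / (g lam - g 0))
      have hk' : g 0 < (k : ℝ) * (g lam - g 0) := (div_lt_iff₀ hgt).mp hk
      have hnn := hgnn (-((k : ℝ) * lam))
      rw [hneg k, (hval k).1] at hnn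
      nlinarith
  have efinal : G (Matrix.vecMulVec t₁ t₁) = G (Matrix.vecMulVec t₂ t₂) := by
    have hl : g lam = G (Matrix.vecMulVec t₂ t₂) := by
      simp only [hgdef]
      have : u + lam • s = t₂ := by rw [ht, hudef]
      rw [this]
    have h0' : g 0 = G (Matrix.vecMulVec t₁ t₁) := by
      simp only [hgdef]
      rw [zero_smul, add_zero, huu]
    rw [← h0', ← hl]
    exact hδ.symm
  simpa only [hGdef, hCdef] using efinal
end

section
/- Let n ≥ 2 and let F : (ℳⁿ)ⁿ → ℝ be a nonnegative function which is additive in each variable and which satisfies F(A₁,…,Aₙ) = 0 whenever two of its arguments are proportional matrices of rank one. Then F is symmetric in any pair of rank-one arguments: for all s, t ∈ ℝⁿ, all indices i ≠ j, and all A_k ∈ ℳⁿ (k ≠ i,j), the value of F on the tuple with i-th entry s sᵀ and j-th entry t tᵀ equals the value of F on the tuple with i-th entry t tᵀ and j-th entry s sᵀ (all other entries unchanged). -/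
open Matrix Function

variable {n : ℕ}

private lemma vv_psd (x : Fin n → ℝ) : (vecMulVec x x).PosSemidef := by
  have h : vecMulVec x x = (replicateRow Unit x)ᴴ * replicateRow Unit x := by
    rw [conjTranspose_replicateRow, vecMulVec_eq Unit]
    simp
  rw [h]; exact posSemidef_conjTranspose_mul_self _

private lemma vv_mulVec (x y : Fin n → ℝ) : (vecMulVec x x) *ᵥ y = (x ⬝ᵥ y) • x := by
  ext i
  simp only [mulVec, dotProduct, vecMulVec_apply, Pi.smul_apply, smul_eq_mul,
    Finset.sum_mul]
  exact Finset.sum_congr rfl fun j _ => by ring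

private lemma vv_rank {x : Fin n → ℝ} (hx : x ≠ 0) : (vecMulVec x x).rank = 1 := by
  have hxx : x ⬝ᵥ x ≠ 0 := fun h => hx ((dotProduct_self_eq_zero).mp h)
  have hrange : LinearMap.range (vecMulVec x x).mulVecLin = Submodule.span ℝ {x} := by
    apply le_antisymm
    · rintro _ ⟨y, rfl⟩
      rw [mulVecLin_apply, vv_mulVec]
      exact Submodule.smul_mem _ _ (Submodule.mem_span_singleton_self x)
    · rw [Submodule.span_singleton_le_iff_mem]
      refine ⟨(x ⬝ᵥ x)⁻¹ • x, ?_⟩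
      rw [mulVecLin_apply, vv_mulVec, dotProduct_smul, smul_eq_mul,
        inv_mul_cancel₀ hxx, one_smul]
  rw [Matrix.rank, hrange, finrank_span_singleton hx]

private lemma aux_affine {f : ℤ → ℝ} (hrec : ∀ k : ℤ, f (k + 1) + f (k - 1) = 2 * f k)
    (hnn : ∀ k : ℤ, 0 ≤ f k) : f 1 = f 0 := by
  set d : ℝ := f 1 - f 0 with hd
  have hstep : ∀ k : ℤ, f (k + 1) - f k = d := by
    intro k
    induction k using Int.induction_on with
    | zero => simp [hd]
    | succ m ih =>
      have h := hrec ((m : ℤ) + 1)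
      rw [show ((m : ℤ) + 1 - 1) = (m : ℤ) from by ring] at h
      linarith
    | pred m ih =>
      have h := hrec (-(m : ℤ))
      rw [show (-(m : ℤ) - 1 + 1) = -(m : ℤ) from by ring]
      rw [show (-(m : ℤ) + 1) = -(m : ℤ) + 1 from rfl] at h
      linarith
  have key : ∀ k : ℤ, f k = f 0 + k * d := by
    intro k
    induction k using Int.induction_on with
    | zero => simp
    | succ m ih =>
      have h := hstep (m : ℤ)
      push_cast at ih ⊢
      linarith
    | pred m ih =>
      have h := hstep (-(m : ℤ) - 1)
      rw [show (-(m : ℤ) - 1 + 1) = -(m : ℤ) from by ring] at h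
      push_cast at ih ⊢
      linarith
  have hdz : d = 0 := by
    by_contra hdne
    rcases lt_or_gt_of_ne hdne with hneg | hpos
    · obtain ⟨m, hm⟩ := exists_nat_gt (f 0 / (-d))
      have h1 : f 0 < m * (-d) := by rwa [div_lt_iff₀ (by linarith)] at hm
      have h2 := key m
      have h3 := hnn m
      push_cast at h2
      nlinarith
    · obtain ⟨m, hm⟩ := exists_nat_gt (f 0 / d)
      have h1 : f 0 < m * d := by rwa [div_lt_iff₀ (by linarith)] at hm
      have h2 := key (-m)
      have h3 := hnn (-m)
      push_cast at h2
      nlinarith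
  linarith [hd ▸ hdz]

private lemma hmat (y z : Fin n → ℝ) :
    vecMulVec (y + z) (y + z) + vecMulVec (y - z) (y - z) =
      (vecMulVec y y + vecMulVec y y) + (vecMulVec z z + vecMulVec z z) := by
  ext a b
  simp [vecMulVec_apply]
  ring

private lemma hneg (y : Fin n → ℝ) : vecMulVec (-y) (-y) = vecMulVec y y := by
  ext a b
  simp [vecMulVec_apply]

private lemma core (G : Matrix (Fin n) (Fin n) ℝ → Matrix (Fin n) (Fin n) ℝ → ℝ)
    (hadd1 : ∀ X X' Y, X.PosSemidef → X'.PosSemidef → Y.PosSemidef →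
      G (X + X') Y = G X Y + G X' Y)
    (hadd2 : ∀ X Y Z, X.PosSemidef → Y.PosSemidef → Z.PosSemidef →
      G X (Y + Z) = G X Y + G X Z)
    (hnn : ∀ X Y, X.PosSemidef → Y.PosSemidef → 0 ≤ G X Y)
    (hdiag : ∀ x : Fin n → ℝ, G (vecMulVec x x) (vecMulVec x x) = 0) :
    ∀ s t : Fin n → ℝ,
      G (vecMulVec s s) (vecMulVec t t) = G (vecMulVec t t) (vecMulVec s s) := by
  have par2 : ∀ x y z : Fin n → ℝ,
      G (vecMulVec x x) (vecMulVec (y + z) (y + z)) +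
        G (vecMulVec x x) (vecMulVec (y - z) (y - z)) =
      (G (vecMulVec x x) (vecMulVec y y) + G (vecMulVec x x) (vecMulVec y y)) +
        (G (vecMulVec x x) (vecMulVec z z) + G (vecMulVec x x) (vecMulVec z z)) := by
    intro x y z
    rw [← hadd2 _ _ _ (vv_psd x) (vv_psd _) (vv_psd _), hmat y z,
      hadd2 _ _ _ (vv_psd x) ((vv_psd y).add (vv_psd y)) ((vv_psd z).add (vv_psd z)),
      hadd2 _ _ _ (vv_psd x) (vv_psd y) (vv_psd y),
      hadd2 _ _ _ (vv_psd x) (vv_psd z) (vv_psd z)]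
  have par1 : ∀ x y z : Fin n → ℝ,
      G (vecMulVec (y + z) (y + z)) (vecMulVec x x) +
        G (vecMulVec (y - z) (y - z)) (vecMulVec x x) =
      (G (vecMulVec y y) (vecMulVec x x) + G (vecMulVec y y) (vecMulVec x x)) +
        (G (vecMulVec z z) (vecMulVec x x) + G (vecMulVec z z) (vecMulVec x x)) := by
    intro x y z
    rw [← hadd1 _ _ _ (vv_psd _) (vv_psd _) (vv_psd x), hmat y z,
      hadd1 _ _ _ ((vv_psd y).add (vv_psd y)) ((vv_psd z).add (vv_psd z)) (vv_psd x),
      hadd1 _ _ _ (vv_psd y) (vv_psd y) (vv_psd x),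
      hadd1 _ _ _ (vv_psd z) (vv_psd z) (vv_psd x)]
  -- translation invariance in the second slot
  have step2 : ∀ x y : Fin n → ℝ,
      G (vecMulVec x x) (vecMulVec (y + x) (y + x)) =
        G (vecMulVec x x) (vecMulVec y y) := by
    intro x y
    set f : ℤ → ℝ := fun m => G (vecMulVec x x)
      (vecMulVec (y + (m : ℝ) • x) (y + (m : ℝ) • x)) with hf
    have hrec : ∀ k : ℤ, f (k + 1) + f (k - 1) = 2 * f k := by
      intro k
      have h := par2 x (y + (k : ℝ) • x) x
      have e1 : (y + (k : ℝ) • x) + x = y + ((k + 1 : ℤ) : ℝ) • x := by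
        push_cast [add_smul, one_smul]; abel
      have e2 : (y + (k : ℝ) • x) - x = y + ((k - 1 : ℤ) : ℝ) • x := by
        push_cast [sub_smul, one_smul]; abel
      rw [e1, e2] at h
      have hxx := hdiag x
      simp only [hf]
      linarith
    have hnnf : ∀ k : ℤ, 0 ≤ f k := fun k => hnn _ _ (vv_psd x) (vv_psd _)
    have h10 := aux_affine hrec hnnf
    simpa [hf] using h10
  have step1 : ∀ x y : Fin n → ℝ,
      G (vecMulVec (y + x) (y + x)) (vecMulVec x x) =
        G (vecMulVec y y) (vecMulVec x x) := by
    intro x y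
    set f : ℤ → ℝ := fun m => G (vecMulVec (y + (m : ℝ) • x) (y + (m : ℝ) • x))
      (vecMulVec x x) with hf
    have hrec : ∀ k : ℤ, f (k + 1) + f (k - 1) = 2 * f k := by
      intro k
      have h := par1 x (y + (k : ℝ) • x) x
      have e1 : (y + (k : ℝ) • x) + x = y + ((k + 1 : ℤ) : ℝ) • x := by
        push_cast [add_smul, one_smul]; abel
      have e2 : (y + (k : ℝ) • x) - x = y + ((k - 1 : ℤ) : ℝ) • x := by
        push_cast [sub_smul, one_smul]; abel
      rw [e1, e2] at h
      have hxx := hdiag x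
      simp only [hf]
      linarith
    have hnnf : ∀ k : ℤ, 0 ≤ f k := fun k => hnn _ _ (vv_psd _) (vv_psd x)
    have h10 := aux_affine hrec hnnf
    simpa [hf] using h10
  have step2' : ∀ x y : Fin n → ℝ,
      G (vecMulVec x x) (vecMulVec (y - x) (y - x)) =
        G (vecMulVec x x) (vecMulVec y y) := by
    intro x y
    have h := step2 x (y - x)
    rw [sub_add_cancel] at h
    exact h.symm
  intro s t
  calc G (vecMulVec s s) (vecMulVec t t)
      = G (vecMulVec (s + t) (s + t)) (vecMulVec t t) := (step1 t s).symm
    _ = G (vecMulVec (s + t) (s + t))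
          (vecMulVec (t - (s + t)) (t - (s + t))) := (step2' (s + t) t).symm
    _ = G (vecMulVec (s + t) (s + t)) (vecMulVec (-s) (-s)) := by
          rw [show t - (s + t) = -s from by abel]
    _ = G (vecMulVec (s + t) (s + t)) (vecMulVec s s) := by rw [hneg s]
    _ = G (vecMulVec (t + s) (t + s)) (vecMulVec s s) := by rw [add_comm s t]
    _ = G (vecMulVec t t) (vecMulVec s s) := step1 s t


/-- Lemma 5 of Florentin–Milman–Schneider: a nonnegative function of `n` positive
semidefinite matrices which is additive in each variable and vanishes when two of
its arguments are proportional rank-one matrices is symmetric in any pair of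
rank-one (outer product) arguments. -/
theorem F_symm_on_segments {n : ℕ} (hn : 2 ≤ n)
    (F : (Fin n → Matrix (Fin n) (Fin n) ℝ) → ℝ)
    (hnonneg : ∀ A : Fin n → Matrix (Fin n) (Fin n) ℝ,
      (∀ j, (A j).PosSemidef) → 0 ≤ F A)
    (hadd : ∀ (A : Fin n → Matrix (Fin n) (Fin n) ℝ) (i : Fin n)
      (B : Matrix (Fin n) (Fin n) ℝ), (∀ j, (A j).PosSemidef) → B.PosSemidef →
      F (Function.update A i (A i + B)) = F A + F (Function.update A i B))
    (hvanish : ∀ A : Fin n → Matrix (Fin n) (Fin n) ℝ,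
      (∀ j, (A j).PosSemidef) →
      (∃ i j, i ≠ j ∧ (A i).rank = 1 ∧ (A j).rank = 1 ∧
        ∃ c : ℝ, 0 < c ∧ A i = c • A j) →
      F A = 0) :
    ∀ (s t : Fin n → ℝ) (i j : Fin n), i ≠ j →
      ∀ A : Fin n → Matrix (Fin n) (Fin n) ℝ, (∀ k, (A k).PosSemidef) →
      F (Function.update (Function.update A i (Matrix.vecMulVec s s)) j
          (Matrix.vecMulVec t t)) =
      F (Function.update (Function.update A i (Matrix.vecMulVec t t)) j
          (Matrix.vecMulVec s s)) := by
  intro s t i j hij A hA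
  set G : Matrix (Fin n) (Fin n) ℝ → Matrix (Fin n) (Fin n) ℝ → ℝ :=
    fun X Y => F (Function.update (Function.update A i X) j Y) with hG
  have psd0 : (0 : Matrix (Fin n) (Fin n) ℝ).PosSemidef :=
    ⟨Matrix.isHermitian_zero, by simp⟩
  have hupPSD : ∀ X Y : Matrix (Fin n) (Fin n) ℝ, X.PosSemidef → Y.PosSemidef →
      ∀ k, ((Function.update (Function.update A i X) j Y) k).PosSemidef := by
    intro X Y hX hY k
    rcases eq_or_ne k j with rfl | hkj
    · simpa using hY
    · rcases eq_or_ne k i with rfl | hki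
      · simpa [Function.update_apply, hkj] using hX
      · simpa [Function.update_apply, hkj, hki] using hA k
  have hswap : ∀ X Y Z : Matrix (Fin n) (Fin n) ℝ,
      Function.update (Function.update (Function.update A i X) j Y) i Z =
        Function.update (Function.update A i Z) j Y := by
    intro X Y Z
    funext k
    simp only [Function.update_apply]
    split_ifs with h1 h2 <;> simp_all
  have hadd2 : ∀ X Y Z : Matrix (Fin n) (Fin n) ℝ, X.PosSemidef → Y.PosSemidef →
      Z.PosSemidef → G X (Y + Z) = G X Y + G X Z := by
    intro X Y Z hX hY hZ
    have h := hadd (Function.update (Function.update A i X) j Y) j Z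
      (hupPSD X Y hX hY) hZ
    rw [Function.update_self, Function.update_idem, Function.update_idem] at h
    exact h
  have hadd1 : ∀ X X' Y : Matrix (Fin n) (Fin n) ℝ, X.PosSemidef → X'.PosSemidef →
      Y.PosSemidef → G (X + X') Y = G X Y + G X' Y := by
    intro X X' Y hX hX' hY
    have h := hadd (Function.update (Function.update A i X) j Y) i X'
      (hupPSD X Y hX hY) hX'
    rw [show (Function.update (Function.update A i X) j Y) i = X from by
        simp [Function.update_apply, hij]] at h
    rw [hswap X Y (X + X'), hswap X Y X'] at h
    exact h
  have hnn : ∀ X Y : Matrix (Fin n) (Fin n) ℝ, X.PosSemidef → Y.PosSemidef →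
      0 ≤ G X Y := fun X Y hX hY => hnonneg _ (hupPSD X Y hX hY)
  have hdiag : ∀ x : Fin n → ℝ,
      G (Matrix.vecMulVec x x) (Matrix.vecMulVec x x) = 0 := by
    intro x
    rcases eq_or_ne x 0 with rfl | hx
    · have h0 : Matrix.vecMulVec (0 : Fin n → ℝ) (0 : Fin n → ℝ) = (0 : Matrix (Fin n) (Fin n) ℝ) := by
        ext a b; simp [Matrix.vecMulVec_apply]
      rw [h0]
      have h := hadd2 0 0 0 psd0 psd0 psd0
      rw [add_zero] at h
      linarith
    · apply hvanish _ (hupPSD _ _ (vv_psd x) (vv_psd x))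
      refine ⟨i, j, hij, ?_, ?_, 1, one_pos, ?_⟩
      · rw [show (Function.update (Function.update A i (Matrix.vecMulVec x x)) j
            (Matrix.vecMulVec x x)) i = Matrix.vecMulVec x x from by
            simp [Function.update_apply, hij]]
        exact vv_rank hx
      · rw [Function.update_self]
        exact vv_rank hx
      · simp [Function.update_apply, hij]
  exact core G hadd1 hadd2 hnn hdiag s t
end

section
/- The mixed discriminant is nonnegative on positive semidefinite matrices: for all A₁,…,Aₙ ∈ ℳⁿ, D(A₁,…,Aₙ) ≥ 0. -/
open Matrix

/-- The mixed discriminant is nonnegative on positive semidefinite matrices. -/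
theorem mixedDisc_nonneg {n : ℕ} (A : Fin n → Matrix (Fin n) (Fin n) ℝ)
    (hA : ∀ i, (A i).PosSemidef) : 0 ≤ mixedDisc n A := by
  have hBex : ∀ i, ∃ B : Matrix (Fin n) (Fin n) ℝ, A i = Bᴴ * B :=
    fun i => by
      classical
      open scoped MatrixOrder in
      obtain ⟨B, hB⟩ := CStarAlgebra.nonneg_iff_eq_star_mul_self.mp (hA i).nonneg
      exact ⟨B, hB⟩
  choose B hB using hBex
  have hentry : ∀ i p q, A i p q = ∑ c, B i c p * B i c q := by
    intro i p q
    rw [hB i, Matrix.mul_apply]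
    simp [Matrix.conjTranspose_apply]
  -- V k is the matrix whose i-th column is the (k i)-th row of B i
  set V : (Fin n → Fin n) → Matrix (Fin n) (Fin n) ℝ :=
    fun k => Matrix.of fun p i => B i (k i) p with hV
  have step1 : ∀ σ : Equiv.Perm (Fin n),
      (Matrix.of fun i j => A (σ j) i j).det
      = ∑ g : Fin n → Fin n,
          (Matrix.of fun p j => B (σ j) (g j) p).det * ∏ j, B (σ j) (g j) j := by
    intro σ
    rw [Matrix.det_apply']
    simp only [Matrix.of_apply, hentry]
    have : ∀ τ : Equiv.Perm (Fin n),
        (∏ j, ∑ c, B (σ j) c (τ j) * B (σ j) c j)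
        = ∑ g : Fin n → Fin n,
            (∏ j, B (σ j) (g j) (τ j)) * ∏ j, B (σ j) (g j) j := by
      intro τ
      rw [Finset.prod_univ_sum]
      rw [Fintype.piFinset_univ]
      exact Finset.sum_congr rfl fun g _ => Finset.prod_mul_distrib
    simp_rw [this, Finset.mul_sum]
    rw [Finset.sum_comm]
    refine Finset.sum_congr rfl fun g _ => ?_
    rw [Matrix.det_apply', Finset.sum_mul]
    refine Finset.sum_congr rfl fun τ _ => ?_
    simp only [Matrix.of_apply]
    ring
  have key : ∑ σ : Equiv.Perm (Fin n), (Matrix.of fun i j => A (σ j) i j).det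
      = ∑ k : Fin n → Fin n, (V k).det ^ 2 := by
    simp_rw [step1]
    have step2 : ∀ σ : Equiv.Perm (Fin n),
        (∑ g : Fin n → Fin n,
          (Matrix.of fun p j => B (σ j) (g j) p).det * ∏ j, B (σ j) (g j) j)
        = ∑ k : Fin n → Fin n,
            ((Equiv.Perm.sign σ : ℝ) * (V k).det) * ∏ j, (V k)ᵀ (σ j) j := by
      intro σ
      refine Fintype.sum_equiv (Equiv.arrowCongr (σ : Fin n ≃ Fin n)
        (Equiv.refl (Fin n))) _ _ fun g => ?_
      set k : Fin n → Fin n := (Equiv.arrowCongr (σ : Fin n ≃ Fin n) (Equiv.refl (Fin n))) g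
        with hk
      have hkg : ∀ j, k (σ j) = g j := by
        intro j; simp [hk, Equiv.arrowCongr]
      have hm : (Matrix.of fun p j => B (σ j) (g j) p)
          = (V k).submatrix id σ := by
        ext p j
        simp [hV, Matrix.submatrix_apply, hkg]
      rw [hm, Matrix.det_permute']
      congr 1
      refine Finset.prod_congr rfl fun j _ => ?_
      simp [hV, Matrix.transpose_apply, hkg]
    simp_rw [step2]
    rw [Finset.sum_comm]
    refine Finset.sum_congr rfl fun k _ => ?_
    have : ∑ σ : Equiv.Perm (Fin n),
        ((Equiv.Perm.sign σ : ℝ) * (V k).det) * ∏ j, (V k)ᵀ (σ j) j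
        = (V k).det * ((V k)ᵀ).det := by
      rw [Matrix.det_apply' ((V k)ᵀ), Finset.mul_sum]
      refine Finset.sum_congr rfl fun σ _ => by ring
    rw [this, Matrix.det_transpose, sq]
  unfold mixedDisc
  rw [key]
  positivity
end

section
/- Let n ≥ 2 and ℓ > 0. Let A_S be the n×n matrix with entry ℓ² at position (n,n) and zeros elsewhere, and let A₂,…,Aₙ be real symmetric n×n matrices whose n-th row and n-th column are zero, with upper-left (n−1)×(n−1) blocks A'₂,…,A'ₙ. Then n·D(A_S, A₂,…,Aₙ) = ℓ²·D'(A'₂,…,A'ₙ), where D is the n-dimensional mixed discriminant and D' is the (n−1)-dimensional mixed discriminant. -/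
/-- Extension of a permutation of `Fin m` to `Fin (m+1)` sending `last` to `p`. -/
def permExt (m : ℕ) (p : Fin (m + 1)) (τ : Equiv.Perm (Fin m)) : Equiv.Perm (Fin (m + 1)) :=
  (((finSuccEquiv' (Fin.last m)).trans (Equiv.optionCongr τ)).trans
      (finSuccEquiv' 0).symm).trans (Equiv.swap 0 p)

theorem permExt_last (m : ℕ) (p : Fin (m + 1)) (τ : Equiv.Perm (Fin m)) :
    permExt m p τ (Fin.last m) = p := by
  simp [permExt, finSuccEquiv'_at, finSuccEquiv'_symm_none]

theorem permExt_castSucc (m : ℕ) (p : Fin (m + 1)) (τ : Equiv.Perm (Fin m)) (j : Fin m) :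
    permExt m p τ j.castSucc = Equiv.swap 0 p (τ j).succ := by
  have h1 : finSuccEquiv' (Fin.last m) j.castSucc = some j := by
    rw [← Fin.succAbove_last, finSuccEquiv'_succAbove]
  simp [permExt, h1, finSuccEquiv'_symm_some, Fin.zero_succAbove]

theorem permExt_bijective (m : ℕ) :
    Function.Bijective (fun x : Fin (m + 1) × Equiv.Perm (Fin m) => permExt m x.1 x.2) := by
  rw [Fintype.bijective_iff_injective_and_card]
  constructor
  · rintro ⟨p, τ⟩ ⟨p', τ'⟩ h
    have hp : p = p' := by
      have := congrArg (fun σ : Equiv.Perm (Fin (m + 1)) => σ (Fin.last m)) h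
      simpa [permExt_last] using this
    subst hp
    have hτ : τ = τ' := by
      ext j
      have := congrArg (fun σ : Equiv.Perm (Fin (m + 1)) => σ j.castSucc) h
      simp only [permExt_castSucc] at this
      have := (Equiv.swap 0 p).injective this
      exact congrArg Fin.val (Fin.succ_injective _ this)
    simp [hτ]
  · simp [Fintype.card_perm, Nat.factorial_succ, mul_comm]

/-- Let `n = m + 1 ≥ 2`. If `A_S` has entry `ℓ²` at the last diagonal position and
zeros elsewhere, and `A₂,…,Aₙ` are symmetric matrices whose last row and column
vanish, with upper-left `(n-1) × (n-1)` blocks `A'₂,…,A'ₙ`, then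
`n·D(A_S, A₂,…,Aₙ) = ℓ²·D'(A'₂,…,A'ₙ)`. -/
theorem mixedDisc_reduction {m : ℕ} (hm : 1 ≤ m) (ℓ : ℝ) (hℓ : 0 < ℓ)
    (AS : Matrix (Fin (m + 1)) (Fin (m + 1)) ℝ)
    (hAS : AS = Matrix.of fun i j =>
      if i = Fin.last m ∧ j = Fin.last m then ℓ ^ 2 else 0)
    (A : Fin m → Matrix (Fin (m + 1)) (Fin (m + 1)) ℝ)
    (hAsymm : ∀ k, (A k).IsSymm)
    (hArow : ∀ k j, A k (Fin.last m) j = 0)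
    (hAcol : ∀ k i, A k i (Fin.last m) = 0)
    (A' : Fin m → Matrix (Fin m) (Fin m) ℝ)
    (hA' : ∀ k, A' k = Matrix.of fun i j => A k i.castSucc j.castSucc) :
    (m + 1 : ℝ) * mixedDisc (m + 1) (Fin.cons AS fun k => A k) =
      ℓ ^ 2 * mixedDisc m A' := by
  classical
  set F : Fin (m + 1) → Matrix (Fin (m + 1)) (Fin (m + 1)) ℝ := Fin.cons AS fun k => A k with hF
  -- the key sum identity
  have key : ∑ σ : Equiv.Perm (Fin (m + 1)), (Matrix.of fun i j => F (σ j) i j).det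
      = ℓ ^ 2 * ∑ τ : Equiv.Perm (Fin m), (Matrix.of fun i j => A' (τ j) i j).det := by
    -- re-index by permExt
    rw [← Fintype.sum_bijective _ (permExt_bijective m)
      (fun x : Fin (m + 1) × Equiv.Perm (Fin m) =>
        (Matrix.of fun i j => F (permExt m x.1 x.2 j) i j).det)
      (fun σ => (Matrix.of fun i j => F (σ j) i j).det) (fun x => rfl)]
    rw [Fintype.sum_prod_type]
    rw [Finset.sum_eq_single (0 : Fin (m + 1))]
    · -- the p = 0 term
      rw [Finset.mul_sum]
      refine Finset.sum_congr rfl fun τ _ => ?_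
      -- compute the determinant by expanding the last column
      set M : Matrix (Fin (m + 1)) (Fin (m + 1)) ℝ :=
        Matrix.of fun i j => F (permExt m 0 τ j) i j with hM
      have hlastcol : ∀ i, M i (Fin.last m) = if i = Fin.last m then ℓ ^ 2 else 0 := by
        intro i
        have : permExt m 0 τ (Fin.last m) = 0 := permExt_last m 0 τ
        simp only [hM, Matrix.of_apply, this, hF, Fin.cons_zero, hAS]
        by_cases hi : i = Fin.last m <;> simp [hi]
      have hsub : (M.submatrix (Fin.last m).succAbove (Fin.last m).succAbove)
          = Matrix.of fun i j => A' (τ j) i j := by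
        ext i j
        have hperm : permExt m 0 τ j.castSucc = (τ j).succ := by
          rw [permExt_castSucc]; simp
        simp only [Matrix.submatrix_apply, Fin.succAbove_last, hM, Matrix.of_apply,
          hperm, hF, Fin.cons_succ, hA']
      have : M.det = ℓ ^ 2 * (Matrix.of fun i j => A' (τ j) i j).det := by
        rw [Matrix.det_succ_column M (Fin.last m)]
        rw [Finset.sum_eq_single (Fin.last m)]
        · rw [hlastcol, hsub]
          simp [Fin.val_last, ← two_mul, pow_mul]
        · intro i _ hi
          rw [hlastcol, if_neg hi]; ring
        · intro h; exact absurd (Finset.mem_univ _) h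
      exact this
    · -- p ≠ 0 terms vanish
      intro p _ hp
      refine Finset.sum_eq_zero fun τ _ => ?_
      apply Matrix.det_eq_zero_of_column_eq_zero (Fin.last m)
      intro i
      obtain ⟨k, hk⟩ := Fin.eq_succ_of_ne_zero hp
      simp only [Matrix.of_apply, permExt_last, hk, hF, Fin.cons_succ]
      exact hAcol k i
    · intro h; exact absurd (Finset.mem_univ _) h
  -- finish with arithmetic
  rw [mixedDisc, mixedDisc, key]
  have h1 : ((m + 1).factorial : ℝ) = (m + 1) * m.factorial := by
    push_cast [Nat.factorial_succ]; ring
  have h2 : (m.factorial : ℝ) ≠ 0 := Nat.cast_ne_zero.mpr m.factorial_ne_zero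
  have h3 : ((m : ℝ) + 1) ≠ 0 := by positivity
  rw [h1]
  field_simp
end

section
/- Let n ≥ 2 and let s, t₁, t₂ ∈ ℝⁿ be nonzero vectors such that t₂ = ε·t₁ + μ·s for some ε ∈ {1,−1} and μ ∈ ℝ, and suppose t₁ is not a scalar multiple of s. Then for every ε' ∈ (0,1) there exists λ > 0 such that (1−ε')·t₁t₁ᵀ ≼ t₂t₂ᵀ + λ·s sᵀ, i.e., the matrix t₂t₂ᵀ + λ·s sᵀ − (1−ε')·t₁t₁ᵀ is positive semidefinite. -/
open Matrix

lemma quad_form_vecMulVec {n : ℕ} (a x : Fin n → ℝ) :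
    x ⬝ᵥ (Matrix.vecMulVec a a *ᵥ x) = (a ⬝ᵥ x) * (a ⬝ᵥ x) := by
  simp only [dotProduct, Matrix.mulVec, Matrix.vecMulVec_apply,
    Finset.sum_mul, Finset.mul_sum]
  rw [Finset.sum_comm]
  apply Finset.sum_congr rfl
  intro i _
  apply Finset.sum_congr rfl
  intro j _
  ring

/-- The key inclusion in the proof of Lemma 4 of Florentin–Milman–Schneider, in
matrix form: if `t₂ = ±t₁ + μs` and `t₁` is not parallel to `s`, then for every
`ε' ∈ (0,1)` there is `λ > 0` with `(1-ε')·t₁t₁ᵀ ≼ t₂t₂ᵀ + λ·ssᵀ` in the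
Loewner order. -/
theorem loewner_segment_inclusion {n : ℕ} (hn : 2 ≤ n)
    (s t₁ t₂ : Fin n → ℝ) (hs : s ≠ 0) (ht₁ : t₁ ≠ 0) (ht₂ : t₂ ≠ 0)
    (ε μ : ℝ) (hε : ε = 1 ∨ ε = -1) (ht : t₂ = ε • t₁ + μ • s)
    (hpar : ¬ ∃ c : ℝ, t₁ = c • s) :
    ∀ ε' : ℝ, 0 < ε' → ε' < 1 → ∃ lam : ℝ, 0 < lam ∧
      (Matrix.vecMulVec t₂ t₂ + lam • Matrix.vecMulVec s s -
        (1 - ε') • Matrix.vecMulVec t₁ t₁).PosSemidef := by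
  intro ε' hε'0 hε'1
  refine ⟨μ ^ 2 / ε' + 1, by positivity, Matrix.posSemidef_iff_dotProduct_mulVec.mpr ⟨?_, ?_⟩⟩
  · -- Hermitian
    ext i j
    simp [Matrix.vecMulVec_apply, Matrix.IsHermitian, Matrix.conjTranspose_apply]
    ring
  · intro x
    simp only [star_trivial]
    simp only [Matrix.add_mulVec, Matrix.sub_mulVec, Matrix.smul_mulVec,
      dotProduct_add, dotProduct_sub, dotProduct_smul,
      smul_eq_mul, quad_form_vecMulVec]
    set a := t₁ ⬝ᵥ x with ha
    set b := s ⬝ᵥ x with hb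
    have ht2 : t₂ ⬝ᵥ x = ε * a + μ * b := by
      simp [ht, add_dotProduct, smul_dotProduct, ha, hb]
    rw [ht2]
    have hε2 : ε * ε = 1 := by rcases hε with h | h <;> rw [h] <;> ring
    have key : 0 ≤ (ε' * a + ε * μ * b) ^ 2 + (ε' * μ ^ 2 + ε') * b ^ 2 := by
      positivity
    have hε'ne : ε' ≠ 0 := ne_of_gt hε'0
    rw [← mul_nonneg_iff_of_pos_left (c := ε') hε'0]
    have heq : ε' * ((ε * a + μ * b) * (ε * a + μ * b) +
        (μ ^ 2 / ε' + 1) * (b * b) - (1 - ε') * (a * a)) =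
        (ε' * a + ε * μ * b) ^ 2 + (ε' * μ ^ 2 + ε') * b ^ 2 := by
      rcases hε with h | h <;> subst h <;> field_simp <;> ring
    linarith [key, heq.ge]
end
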